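/- arXiv:math/0410426 — 8 statements merged into one kernel-verified Lean document; each statement's English description precedes it below -/
import Mathlib

section
/- Let (Y,T) be a minimal continuous flow, and let χ₁ and χ₂ be eigenvectors of (Y,T) corresponding to two distinct eigenvalues λ₁ ≠ λ₂. Then sup_{y ∈ Y} |χ₁(y) − χ₂(y)| > 1/4. -/
open Set

/-- A continuous flow: a jointly continuous action of `ℝ` on `Y` with `T 0 = id` and
`T (s + t) = T s ∘ T t`. -/
def IsFlow {Y : Type*} [TopologicalSpace Y] (T : ℝ → Y → Y) : Prop :=
  Continuous (fun p : Y × ℝ => T p.2 p.1) ∧ (∀ y, T 0 y = y) ∧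
    ∀ s t : ℝ, ∀ y, T (s + t) y = T s (T t y)

/-- A set is invariant under the flow if `T t '' M = M` for all `t`. -/
def FlowInvariant {Y : Type*} (T : ℝ → Y → Y) (M : Set Y) : Prop :=
  ∀ t : ℝ, T t '' M = M

/-- The flow is minimal if the only closed invariant subsets are `∅` and `univ`. -/
def IsMinimalFlow {Y : Type*} [TopologicalSpace Y] (T : ℝ → Y → Y) : Prop :=
  ∀ M : Set Y, IsClosed M → FlowInvariant T M → M = ∅ ∨ M = univ

/-- A self-map is minimal if the only closed subsets `M` with `g '' M = M` are `∅` and `univ`. -/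
def IsMinimalMap {Y : Type*} [TopologicalSpace Y] (g : Y → Y) : Prop :=
  ∀ M : Set Y, IsClosed M → g '' M = M → M = ∅ ∨ M = univ

/-- `χ : Y → ℂ` is a (unit-circle valued) eigenvector of the flow `T` with eigenvalue `l ∈ ℝ`
if it is continuous, of modulus one, and `χ (T t y) = e^{2πi l t} * χ y`. -/
def IsEigenvector {Y : Type*} [TopologicalSpace Y] (T : ℝ → Y → Y) (l : ℝ) (χ : Y → ℂ) : Prop :=
  Continuous χ ∧ (∀ y, ‖χ y‖ = 1) ∧
    ∀ (y : Y) (t : ℝ), χ (T t y) = Complex.exp (2 * Real.pi * Complex.I * l * t) * χ y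

/-- The set `Λ(Y, T)` of eigenvalues of a flow. -/
def Eigenvalues {Y : Type*} [TopologicalSpace Y] (T : ℝ → Y → Y) : Set ℝ :=
  {l : ℝ | ∃ χ : Y → ℂ, IsEigenvector T l χ}

/-- If `χ₁` and `χ₂` are eigenvectors of a minimal continuous flow `(Y, T)` for
two distinct eigenvalues, then `sup_{y ∈ Y} |χ₁ y - χ₂ y| > 1/4`. -/
theorem sup_dist_eigenvectors_gt_quarter {Y : Type*} [MetricSpace Y] [CompactSpace Y]
    [Nonempty Y] (T : ℝ → Y → Y) (hT : IsFlow T) (hmin : IsMinimalFlow T)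
    (l₁ l₂ : ℝ) (hne : l₁ ≠ l₂) (χ₁ χ₂ : Y → ℂ)
    (h₁ : IsEigenvector T l₁ χ₁) (h₂ : IsEigenvector T l₂ χ₂) :
    (⨆ y : Y, ‖χ₁ y - χ₂ y‖) > 1 / 4 := by
  obtain ⟨hc₁, ha₁, he₁⟩ := h₁
  obtain ⟨hc₂, ha₂, he₂⟩ := h₂
  have hfc : Continuous fun y => ‖χ₁ y - χ₂ y‖ :=
    (hc₁.sub hc₂).norm
  have hbdd : BddAbove (Set.range fun y => ‖χ₁ y - χ₂ y‖) :=
    (isCompact_range hfc).bddAbove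
  obtain ⟨y₀⟩ := ‹Nonempty Y›
  have h10 : χ₁ y₀ ≠ 0 := by
    intro h
    simpa [h] using ha₁ y₀
  set z : ℂ := -χ₂ y₀ / χ₁ y₀ with hzdef
  have hz1 : ‖z‖ = 1 := by
    simp [hzdef, norm_div, ha₁ y₀, ha₂ y₀]
  have hd : l₁ - l₂ ≠ 0 := sub_ne_zero.mpr hne
  have hπ : (2 : ℝ) * Real.pi * (l₁ - l₂) ≠ 0 := by
    have := Real.pi_ne_zero
    positivity
  set t : ℝ := z.arg / (2 * Real.pi * (l₁ - l₂)) with htdef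
  have hexpz : Complex.exp (2 * Real.pi * Complex.I * l₁ * t - 2 * Real.pi * Complex.I * l₂ * t)
      = z := by
    have h1 : (2 * Real.pi * Complex.I * l₁ * t - 2 * Real.pi * Complex.I * l₂ * t)
        = ((2 * Real.pi * (l₁ - l₂) * t : ℝ) : ℂ) * Complex.I := by
      push_cast
      ring
    have h2 : (2 : ℝ) * Real.pi * (l₁ - l₂) * t = z.arg := by
      rw [htdef]
      field_simp
    rw [h1, h2]
    have := Complex.norm_mul_exp_arg_mul_I z
    rwa [hz1, Complex.ofReal_one, one_mul] at this
  have key : ‖χ₁ (T t y₀) - χ₂ (T t y₀)‖ = 2 := by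
    rw [he₁ y₀ t, he₂ y₀ t]
    have : Complex.exp (2 * Real.pi * Complex.I * l₁ * t) * χ₁ y₀
        = Complex.exp (2 * Real.pi * Complex.I * l₂ * t) * (z * χ₁ y₀) := by
      rw [← hexpz, ← mul_assoc, ← Complex.exp_add, add_sub_cancel]
    rw [this, hzdef, div_mul_cancel₀ _ h10]
    have : Complex.exp (2 * Real.pi * Complex.I * l₂ * t) * -χ₂ y₀
        - Complex.exp (2 * Real.pi * Complex.I * l₂ * t) * χ₂ y₀
        = Complex.exp (2 * Real.pi * Complex.I * l₂ * t) * (-2 * χ₂ y₀) := by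
      ring
    rw [this, norm_mul, Complex.norm_exp]
    simp [ha₂ y₀]
  have hle : ‖χ₁ (T t y₀) - χ₂ (T t y₀)‖ ≤ ⨆ y : Y, ‖χ₁ y - χ₂ y‖ :=
    le_ciSup hbdd (T t y₀)
  rw [key] at hle
  linarith
end

section
/- Let (Y,T) be a continuous flow where the space Y is connected, and let t be a nonzero real number. Then the time-t map T^t is not minimal if and only if for every rational number r the time-(rt) map T^{rt} is not minimal. -/
open Set

set_option linter.unusedSectionVars false
section Aux

variable {Y : Type*} [MetricSpace Y] [CompactSpace Y] {T : ℝ → Y → Y}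

lemma flow_cont (hT : IsFlow T) (s : ℝ) : Continuous (T s) :=
  hT.1.comp (continuous_id.prodMk continuous_const)

lemma flow_cancel (hT : IsFlow T) (s : ℝ) (y : Y) : T (-s) (T s y) = y := by
  rw [← hT.2.2]
  norm_num [hT.2.1]

lemma flow_inj (hT : IsFlow T) (s : ℝ) : Function.Injective (T s) := by
  intro x y h
  have := congrArg (T (-s)) h
  rwa [flow_cancel hT, flow_cancel hT] at this

lemma flow_image (hT : IsFlow T) (s u : ℝ) (M : Set Y) :
    T s '' (T u '' M) = T (s + u) '' M := by
  rw [← image_comp]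
  exact image_congr' (fun y => (hT.2.2 s u y).symm)

lemma flow_image_zero (hT : IsFlow T) (M : Set Y) : T 0 '' M = M := by
  have h : T 0 '' M = (fun y => y) '' M := image_congr' (fun y => hT.2.1 y)
  rw [h, image_id']

lemma flow_inv_nat (hT : IsFlow T) (a : ℝ) (M : Set Y) (h : T a '' M = M) :
    ∀ n : ℕ, T ((n : ℝ) * a) '' M = M := by
  intro n
  induction n with
  | zero => simpa using flow_image_zero hT M
  | succ n ih =>
      have : ((n : ℝ) + 1) * a = (n : ℝ) * a + a := by ring
      rw [Nat.cast_succ, this, ← flow_image hT, h, ih]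

lemma min_nat_to_one (hT : IsFlow T) (a : ℝ) (n : ℕ)
    (h : IsMinimalMap (T ((n : ℝ) * a))) : IsMinimalMap (T a) := by
  intro M hcl hM
  exact h M hcl (flow_inv_nat hT a M hM n)

lemma min_neg (hT : IsFlow T) (a : ℝ) (h : IsMinimalMap (T a)) :
    IsMinimalMap (T (-a)) := by
  intro M hcl hM
  apply h M hcl
  calc T a '' M = T a '' (T (-a) '' M) := by rw [hM]
    _ = T (a + -a) '' M := flow_image hT _ _ _
    _ = M := by rw [add_neg_cancel]; exact flow_image_zero hT M

end Aux

section Hard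
set_option linter.unusedSectionVars false
variable {Y : Type*} [MetricSpace Y] [CompactSpace Y] {T : ℝ → Y → Y}

lemma min_one_to_pow [ConnectedSpace Y] (hT : IsFlow T) (a : ℝ) (n : ℕ) (hn : 0 < n)
    (h : IsMinimalMap (T a)) : IsMinimalMap (T ((n : ℝ) * a)) := by
  set b : ℝ := (n : ℝ) * a with hb
  intro M hMcl hMinv
  rcases M.eq_empty_or_nonempty with h0 | hMne
  · exact Or.inl h0
  right
  set S : Set (Set Y) := {K | K ⊆ M ∧ K.Nonempty ∧ IsClosed K ∧ T b '' K = K} with hS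
  have hzorn : ∀ c ⊆ S, IsChain (· ⊆ ·) c → c.Nonempty → ∃ lb ∈ S, ∀ s ∈ c, lb ⊆ s := by
    intro c hcS hchain hcne
    refine ⟨⋂₀ c, ⟨?_, ?_, ?_, ?_⟩, fun s hs => sInter_subset_of_mem hs⟩
    · obtain ⟨K, hK⟩ := hcne
      exact (sInter_subset_of_mem hK).trans (hcS hK).1
    · haveI : Nonempty c := hcne.to_subtype
      refine IsCompact.nonempty_sInter_of_directed_nonempty_isCompact_isClosed
        (fun x hx y hy => ?_) (fun U hU => (hcS hU).2.1)
        (fun U hU => (hcS hU).2.2.1.isCompact) (fun U hU => (hcS hU).2.2.1)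
      rcases hchain.total hx hy with hxy | hyx
      · exact ⟨x, hx, Subset.rfl, hxy⟩
      · exact ⟨y, hy, hyx, Subset.rfl⟩
    · exact isClosed_sInter (fun U hU => (hcS hU).2.2.1)
    · apply Subset.antisymm
      · rintro x ⟨y, hy, rfl⟩ K hK
        rw [← (hcS hK).2.2.2]
        exact mem_image_of_mem _ (hy K hK)
      · intro x hx
        refine ⟨T (-b) x, fun K hK => ?_, ?_⟩
        · obtain ⟨z, hz, hzx⟩ : x ∈ T b '' K := by
            rw [(hcS hK).2.2.2]; exact hx K hK
          have hz' : T (-b) x = z := by rw [← hzx, flow_cancel hT]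
          rwa [hz']
        · have := flow_cancel hT (-b) x
          simpa using this
  obtain ⟨A, hAM, hAmin⟩ :=
    zorn_superset_nonempty S hzorn M ⟨Subset.rfl, hMne, hMcl, hMinv⟩
  have hA : A ∈ S := hAmin.1
  have key : ∀ K, K ⊆ A → K.Nonempty → IsClosed K → T b '' K = K → K = A :=
    fun K hKA hKne hKcl hKinv =>
      subset_antisymm hKA (hAmin.2 ⟨hKA.trans hA.1, hKne, hKcl, hKinv⟩ hKA)
  set orb : ℕ → Set Y := fun i => T ((i : ℝ) * a) '' A with horb
  have horb0 : orb 0 = A := by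
    simp only [horb, Nat.cast_zero, zero_mul]
    exact flow_image_zero hT A
  have horbn : orb n = A := by
    simp only [horb, ← hb]
    exact hA.2.2.2
  have horbne : ∀ i, (orb i).Nonempty := fun i => hA.2.1.image _
  have horbcl : ∀ i, IsClosed (orb i) :=
    fun i => (hA.2.2.1.isCompact.image (flow_cont hT _)).isClosed
  have hcomm : ∀ (s : ℝ) (K : Set Y), T b '' K = K → T b '' (T s '' K) = T s '' K := by
    intro s K hK
    rw [flow_image hT, add_comm, ← flow_image hT, hK]
  have horbinv : ∀ i, T b '' orb i = orb i := fun i => hcomm _ _ hA.2.2.2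
  have orb_min : ∀ i, ∀ K, K ⊆ orb i → K.Nonempty → IsClosed K → T b '' K = K → K = orb i := by
    intro i K hKo hKne hKcl hKinv
    have hKA : T (-((i : ℝ) * a)) '' K ⊆ A := by
      intro x hx
      obtain ⟨z, hz, rfl⟩ := hx
      obtain ⟨w, hw, rfl⟩ := hKo hz
      rwa [flow_cancel hT]
    have hK' : T (-((i : ℝ) * a)) '' K = A := by
      apply key _ hKA (hKne.image _)
        ((hKcl.isCompact.image (flow_cont hT _)).isClosed)
        (hcomm _ _ hKinv)
    have : T ((i : ℝ) * a) '' (T (-((i : ℝ) * a)) '' K) = K := by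
      rw [flow_image hT, add_neg_cancel, flow_image_zero hT]
    rw [← this, hK']
  have pairwise : ∀ i j, orb i = orb j ∨ orb i ∩ orb j = ∅ := by
    intro i j
    rcases (orb i ∩ orb j).eq_empty_or_nonempty with he | hne
    · exact Or.inr he
    left
    have hinv : T b '' (orb i ∩ orb j) = orb i ∩ orb j := by
      rw [image_inter (flow_inj hT b), horbinv, horbinv]
    have hcl : IsClosed (orb i ∩ orb j) := (horbcl i).inter (horbcl j)
    have h1 : orb i ∩ orb j = orb i := orb_min i _ inter_subset_left hne hcl hinv
    have h2 : orb i ∩ orb j = orb j := orb_min j _ inter_subset_right hne hcl hinv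
    rw [← h1, h2]
  have hU : (⋃ i : Fin n, orb i) = univ := by
    have hTU : T a '' (⋃ i : Fin n, orb i) = ⋃ i : Fin n, orb i := by
      have hstep : ∀ i : ℕ, T a '' orb i = orb (i + 1) := by
        intro i
        simp only [horb]
        rw [flow_image hT]
        push_cast
        ring_nf
      rw [image_iUnion]
      apply Subset.antisymm
      · rintro x hx
        simp only [mem_iUnion] at hx ⊢
        obtain ⟨i, hx⟩ := hx
        rw [hstep] at hx
        rcases Nat.lt_or_ge (i + 1) n with hlt | hge
        · exact ⟨⟨i + 1, hlt⟩, hx⟩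
        · have : (i : ℕ) + 1 = n := le_antisymm (Nat.succ_le_of_lt i.2) hge
          refine ⟨⟨0, hn⟩, ?_⟩
          rw [show ((⟨0, hn⟩ : Fin n) : ℕ) = 0 from rfl, horb0, ← horbn, ← this]
          exact hx
      · rintro x hx
        simp only [mem_iUnion] at hx ⊢
        obtain ⟨i, hx⟩ := hx
        rcases Nat.eq_zero_or_pos (i : ℕ) with h0 | hpos
        · refine ⟨⟨n - 1, Nat.sub_lt hn one_pos⟩, ?_⟩
          rw [hstep]
          have : (n - 1 : ℕ) + 1 = n := Nat.succ_pred_eq_of_pos hn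
          rw [show ((⟨n - 1, Nat.sub_lt hn one_pos⟩ : Fin n) : ℕ) = n - 1 from rfl, this, horbn,
            ← horb0, ← h0]
          exact hx
        · refine ⟨⟨(i : ℕ) - 1, lt_of_le_of_lt (Nat.sub_le _ _) i.2⟩, ?_⟩
          rw [hstep]
          have : ((i : ℕ) - 1) + 1 = (i : ℕ) := Nat.succ_pred_eq_of_pos hpos
          rw [show ((⟨(i : ℕ) - 1, _⟩ : Fin n) : ℕ) = (i : ℕ) - 1 from rfl, this]
          exact hx
    rcases h (⋃ i : Fin n, orb i) (isClosed_iUnion_of_finite (fun i => horbcl i)) hTU with h' | h'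
    · exfalso
      have hsub : orb 0 ⊆ (⋃ i : Fin n, orb i) := subset_iUnion_of_subset ⟨0, hn⟩ (by simp)
      rw [h'] at hsub
      exact absurd (hsub (horbne 0).some_mem) (by simp)
    · exact h'
  -- A is clopen
  have hAopen : IsOpen A := by
    have hVcl : IsClosed (⋃ i ∈ {i : Fin n | orb (i : ℕ) ∩ A = ∅}, orb (i : ℕ)) :=
      (Set.toFinite _).isClosed_biUnion (fun i _ => horbcl _)
    have hAeq : A = (⋃ i ∈ {i : Fin n | orb (i : ℕ) ∩ A = ∅}, orb (i : ℕ))ᶜ := by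
      apply Subset.antisymm
      · intro x hxA
        rw [mem_compl_iff]
        intro hxV
        simp only [mem_iUnion] at hxV
        obtain ⟨i, hi, hx⟩ := hxV
        have hmem : x ∈ orb (i : ℕ) ∩ A := ⟨hx, hxA⟩
        rw [show orb (i : ℕ) ∩ A = ∅ from hi] at hmem
        exact hmem
      · intro x hx
        have hxU : x ∈ ⋃ i : Fin n, orb i := by rw [hU]; trivial
        simp only [mem_iUnion] at hxU
        obtain ⟨i, hxi⟩ := hxU
        rcases pairwise i 0 with heq | hdisj
        · rw [heq, horb0] at hxi; exact hxi
        · rw [horb0] at hdisj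
          exact absurd (mem_biUnion (show i ∈ {i : Fin n | orb (i : ℕ) ∩ A = ∅} from hdisj) hxi) hx
    rw [hAeq]
    exact hVcl.isOpen_compl
  have hAuniv : A = univ :=
    IsClopen.eq_univ ⟨hA.2.2.1, hAopen⟩ hA.2.1
  rw [eq_univ_iff_forall]
  intro x
  exact hA.1 (hAuniv ▸ mem_univ x)
end Hard

/-- Let `(Y, T)` be a continuous flow with `Y` connected and let `t ≠ 0`. Then
the time-`t` map is not minimal iff for every rational `r` the time-`r*t` map is not minimal. -/
theorem not_minimal_iff_forall_rat_not_minimal {Y : Type*} [MetricSpace Y] [CompactSpace Y]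
    [ConnectedSpace Y] (T : ℝ → Y → Y) (hT : IsFlow T) (t : ℝ) (ht : t ≠ 0) :
    ¬ IsMinimalMap (T t) ↔ ∀ r : ℚ, ¬ IsMinimalMap (T ((r : ℝ) * t)) := by
  constructor
  · intro hnot r hr
    apply hnot
    by_cases hr0 : r = 0
    · subst hr0
      simp only [Rat.cast_zero, zero_mul] at hr
      intro M hMcl hMinv
      rcases M.eq_empty_or_nonempty with h0 | ⟨y, hy⟩
      · exact Or.inl h0
      right
      have hsing : ({y} : Set Y) = univ := by
        rcases hr {y} isClosed_singleton (flow_image_zero hT {y}) with h | h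
        · exact absurd h (singleton_ne_empty y)
        · exact h
      exact eq_univ_of_univ_subset (hsing ▸ singleton_subset_iff.mpr hy)
    · set q : ℕ := r.den with hqdef
      set p : ℤ := r.num with hpdef
      have hq : 0 < q := r.pos
      have hq0 : (q : ℝ) ≠ 0 := Nat.cast_ne_zero.mpr hq.ne'
      set a : ℝ := t / q with hadef
      have hpa : (r : ℝ) * t = (p : ℝ) * a := by
        rw [hadef, Rat.cast_def, ← hpdef, ← hqdef]
        field_simp
      have hp0 : p ≠ 0 := Rat.num_ne_zero.mpr hr0
      have h1 : IsMinimalMap (T ((p.natAbs : ℝ) * a)) := by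
        rcases le_or_gt 0 p with hp | hp
        · have : ((p.natAbs : ℝ)) = (p : ℝ) := by
            rw [Nat.cast_natAbs]
            exact_mod_cast abs_of_nonneg hp
          rw [this, ← hpa]
          exact hr
        · have hcast : ((p.natAbs : ℝ)) = -(p : ℝ) := by
            rw [Nat.cast_natAbs]
            exact_mod_cast abs_of_nonpos hp.le
          have : (p.natAbs : ℝ) * a = -((r : ℝ) * t) := by rw [hcast, hpa]; ring
          rw [this]
          exact min_neg hT _ hr
      have h2 : IsMinimalMap (T a) := min_nat_to_one hT a p.natAbs h1
      have h3 : IsMinimalMap (T ((q : ℝ) * a)) := min_one_to_pow hT a q hq h2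
      have hqa : (q : ℝ) * a = t := by
        rw [hadef]
        field_simp
      rwa [hqa] at h3
  · intro hall
    have := hall 1
    simpa using this
end

section
/- Let (Y,T) be a continuous flow where the space Y is connected, let t be a nonzero real number and let q be a positive integer. If the time-(t/q) map T^{t/q} is minimal, then the time-t map T^t is minimal. -/
open Set

/-- Let `(Y, T)` be a continuous flow with `Y` connected, `t ≠ 0` a real number
and `q` a positive integer. If the time-`t/q` map is minimal then the time-`t` map is minimal. -/
theorem minimal_of_minimal_div {Y : Type*} [MetricSpace Y] [CompactSpace Y]
    [ConnectedSpace Y] (T : ℝ → Y → Y) (hT : IsFlow T) (t : ℝ) (ht : t ≠ 0)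
    (q : ℕ) (hq : 0 < q) (h : IsMinimalMap (T (t / (q : ℝ)))) :
    IsMinimalMap (T t) := by
  obtain ⟨hcont, hzero, hadd⟩ := hT
  set u : ℝ := t / (q : ℝ) with hu
  have hqR : (q : ℝ) ≠ 0 := Nat.cast_ne_zero.mpr hq.ne'
  have hqu : (q : ℝ) * u = t := by rw [hu]; field_simp
  -- continuity of each time map
  have hTc : ∀ s : ℝ, Continuous (T s) := by
    intro s
    exact hcont.comp (continuous_id.prodMk continuous_const)
  -- left/right inverse
  have hLI : ∀ s : ℝ, ∀ y, T (-s) (T s y) = y := by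
    intro s y; rw [← hadd]; simp [hzero]
  have hbij : ∀ s : ℝ, Function.Bijective (T s) :=
    fun s => Function.bijective_iff_has_inverse.mpr
      ⟨T (-s), hLI s, fun y => by simpa using hLI (-s) y⟩
  have himg : ∀ s s' : ℝ, ∀ A : Set Y, T s '' (T s' '' A) = T (s + s') '' A := by
    intro s s' A
    rw [Set.image_image]
    exact Set.image_congr fun y _ => (hadd s s' y).symm
  have hT0img : ∀ A : Set Y, T 0 '' A = A := fun A => by
    rw [show T (0:ℝ) = fun y => y from funext hzero, Set.image_id']
  have hLIimg : ∀ s : ℝ, ∀ A : Set Y, T (-s) '' (T s '' A) = A := by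
    intro s A; rw [himg, neg_add_cancel, hT0img]
  intro M hMcl hMinv
  classical
  rcases eq_empty_or_nonempty M with hM | hM
  · exact Or.inl hM
  right
  -- Zorn: find a minimal nonempty closed T t-invariant subset of M
  set S : Set (Set Y) := {N | N ⊆ M ∧ N.Nonempty ∧ IsClosed N ∧ T t '' N = N} with hS
  have hH : ∀ c ⊆ S, IsChain (· ⊆ ·) c → c.Nonempty → ∃ lb ∈ S, ∀ s ∈ c, lb ⊆ s := by
    intro c hcS hchain hcne
    refine ⟨⋂₀ c, ⟨?_, ?_, ?_, ?_⟩, fun s hs => sInter_subset_of_mem hs⟩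
    · obtain ⟨s, hs⟩ := hcne
      exact (sInter_subset_of_mem hs).trans (hcS hs).1
    · have : Nonempty c := hcne.to_subtype
      have hdir : DirectedOn (· ⊇ ·) c := by
        intro a ha b hb
        rcases eq_or_ne a b with rfl | hab
        · exact ⟨a, ha, Subset.rfl, Subset.rfl⟩
        · rcases hchain ha hb hab with hab' | hab'
          · exact ⟨a, ha, Subset.rfl, hab'⟩
          · exact ⟨b, hb, hab', Subset.rfl⟩
      exact IsCompact.nonempty_sInter_of_directed_nonempty_isCompact_isClosed
        hdir (fun U hU => (hcS hU).2.1)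
        (fun U hU => (hcS hU).2.2.1.isCompact) (fun U hU => (hcS hU).2.2.1)
    · exact isClosed_sInter fun U hU => (hcS hU).2.2.1
    · rw [sInter_eq_biInter, Set.image_iInter₂ (hbij t)]
      exact iInter₂_congr fun U hU => (hcS hU).2.2.2
  obtain ⟨m, hmM, hmS, hmmin⟩ :
      ∃ m, m ⊆ M ∧ m ∈ S ∧ ∀ z ∈ S, z ⊆ m → m ⊆ z := by
    obtain ⟨m, hmM, hmin⟩ := zorn_superset_nonempty S hH M ⟨Subset.rfl, hM, hMcl, hMinv⟩
    exact ⟨m, hmM, hmin.1, fun z hz hzm => hmin.2 hz hzm⟩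
  obtain ⟨hmM', hmne, hmcl, hminv⟩ := hmS
  -- minimality of m as a property
  have hminm : ∀ P : Set Y, P ⊆ m → P.Nonempty → IsClosed P → T t '' P = P → P = m := by
    intro P hPm hPne hPcl hPinv
    exact hPm.antisymm (hmmin P ⟨hPm.trans hmM, hPne, hPcl, hPinv⟩ hPm)
  -- the translates
  set N : ℕ → Set Y := fun i => T ((i : ℝ) * u) '' m with hN
  have hN0 : N 0 = m := by
    rw [hN]; simp only [Nat.cast_zero, zero_mul]; exact hT0img m
  have hNq : N q = m := by rw [hN]; simp only [hqu]; exact hminv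
  have hNsucc : ∀ i : ℕ, T u '' N i = N (i + 1) := by
    intro i
    have e : u + (i : ℝ) * u = ((i + 1 : ℕ) : ℝ) * u := by push_cast; ring
    rw [hN, himg, e]
  have hNcl : ∀ i, IsClosed (N i) := fun i =>
    (hmcl.isCompact.image (hTc _)).isClosed
  have hNne : ∀ i, (N i).Nonempty := fun i => hmne.image _
  have hNinv : ∀ i, T t '' N i = N i := by
    intro i
    rw [hN, himg, add_comm, ← himg, hminv]
  -- minimality of each translate
  have hminN : ∀ i, ∀ P : Set Y, P ⊆ N i → P.Nonempty → IsClosed P → T t '' P = P → P = N i := by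
    intro i P hPN hPne hPcl hPinv
    have hP' : T (-((i : ℝ) * u)) '' P = m := by
      apply hminm
      · have := Set.image_mono (f := T (-((i : ℝ) * u))) hPN
        rwa [hN, hLIimg] at this
      · exact hPne.image _
      · exact (hPcl.isCompact.image (hTc _)).isClosed
      · rw [himg, add_comm, ← himg, hPinv]
    have := congrArg (Set.image (T ((i : ℝ) * u))) hP'
    rwa [show T ((i : ℝ) * u) '' (T (-((i : ℝ) * u)) '' P) = P from by
      rw [himg, add_neg_cancel, hT0img]] at this
  -- dichotomy: each translate is equal to m or disjoint from it
  have hdich : ∀ i, (N i ∩ m).Nonempty → N i = m := by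
    intro i hne
    have h1 : N i ∩ m = m := hminm _ inter_subset_right hne ((hNcl i).inter hmcl)
      (by rw [Set.image_inter (hbij t).1, hNinv, hminv])
    have h2 : N i ∩ m = N i := hminN i _ inter_subset_left hne ((hNcl i).inter hmcl)
      (by rw [Set.image_inter (hbij t).1, hNinv, hminv])
    rw [← h2, h1]
  -- the union of translates is everything
  have hKinv : T u '' (⋃ i ∈ Finset.range q, N i) = ⋃ i ∈ Finset.range q, N i := by
    rw [Set.image_iUnion₂]
    apply Subset.antisymm
    · refine iUnion₂_subset fun i hi => ?_
      rw [hNsucc]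
      rcases lt_or_eq_of_le (Nat.succ_le_of_lt (Finset.mem_range.mp hi)) with h' | h'
      · exact subset_biUnion_of_mem (Finset.mem_range.mpr h')
      · rw [show i + 1 = q from h', hNq, ← hN0]
        exact subset_biUnion_of_mem (Finset.mem_range.mpr hq)
    · refine iUnion₂_subset fun i hi => ?_
      rcases Nat.eq_zero_or_pos i with rfl | hi'
      · have e : T u '' N (q - 1) = N 0 := by
          rw [hNsucc, Nat.sub_add_cancel hq, hNq, hN0]
        rw [← e]
        exact fun x hx => mem_biUnion (Finset.mem_range.mpr (Nat.sub_lt hq one_pos)) hx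
      · have e : T u '' N (i - 1) = N i := by
          rw [hNsucc, Nat.sub_add_cancel hi']
        rw [← e]
        exact fun x hx => mem_biUnion
          (Finset.mem_range.mpr (lt_of_le_of_lt (Nat.sub_le i 1) (Finset.mem_range.mp hi))) hx
  have hK : (⋃ i ∈ Finset.range q, N i) = univ := by
    rcases h (⋃ i ∈ Finset.range q, N i)
        (isClosed_biUnion_finset fun i _ => hNcl i) hKinv with hK | hK
    · exfalso
      have : N 0 ⊆ (∅ : Set Y) := hK ▸
        subset_biUnion_of_mem (Finset.mem_range.mpr hq)
      exact absurd (this (hNne 0).choose_spec) (notMem_empty _)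
    · exact hK
  -- m is clopen
  have hBdef : mᶜ = ⋃ i ∈ (Finset.range q).filter (fun i => ¬(N i ∩ m).Nonempty), N i := by
    apply Subset.antisymm
    · intro x hx
      have hxK : x ∈ ⋃ i ∈ Finset.range q, N i := hK ▸ mem_univ x
      simp only [mem_iUnion, exists_prop] at hxK ⊢
      obtain ⟨i, hi, hxi⟩ := hxK
      refine ⟨i, Finset.mem_filter.mpr ⟨hi, ?_⟩, hxi⟩
      intro hne
      exact hx (hdich i hne ▸ hxi)
    · intro x hx
      simp only [mem_iUnion, exists_prop, Finset.mem_filter] at hx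
      obtain ⟨i, ⟨_, hdisj⟩, hxi⟩ := hx
      exact fun hxm => hdisj ⟨x, hxi, hxm⟩
  have hmclopen : IsClopen m := by
    refine ⟨hmcl, ?_⟩
    rw [← isClosed_compl_iff, hBdef]
    exact isClosed_biUnion_finset fun i _ => hNcl i
  have : m = univ := hmclopen.eq_univ hmne
  exact eq_univ_of_univ_subset (this ▸ hmM)
end

section
/- Let (Y,T) be a minimal continuous flow, let t > 0 be such that the time-(1/t) map T^{1/t} is not minimal, and let M be a nonempty proper closed subset of Y that is minimal for the homeomorphism T^{1/t}. Then there exists t₀ > 0 such that: (i) {s ∈ ℝ : T^s(M) = M} = t₀ℤ; (ii) the sets T^s(M) for 0 ≤ s < t₀ are pairwise disjoint and their union is Y (so they form a partition of Y); (iii) 1/t₀ is an eigenvalue of (Y,T); and (iv) 1/t = m·t₀ for some nonzero integer m. -/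
open Set

/-- `M` is a minimal set for the self-map `g`: it is nonempty, closed, `g`-invariant, and no
nonempty proper closed subset of `M` is `g`-invariant. -/
def IsMinimalSubset {Y : Type*} [TopologicalSpace Y] (g : Y → Y) (M : Set Y) : Prop :=
  M.Nonempty ∧ IsClosed M ∧ g '' M = M ∧
    ∀ N : Set Y, N ⊆ M → N.Nonempty → N ≠ M → IsClosed N → g '' N ≠ N

namespace FlowAux

variable {Y : Type*} [TopologicalSpace Y] {T : ℝ → Y → Y}

lemma cont2 (hT : IsFlow T) : Continuous fun p : ℝ × Y => T p.1 p.2 :=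
  hT.1.comp continuous_swap

lemma contT (hT : IsFlow T) (s : ℝ) : Continuous (T s) :=
  (cont2 hT).comp (continuous_const.prodMk continuous_id)

lemma contY (hT : IsFlow T) (y : Y) : Continuous fun s : ℝ => T s y :=
  (cont2 hT).comp (continuous_id.prodMk continuous_const)

lemma cancel (hT : IsFlow T) (s : ℝ) (y : Y) : T (-s) (T s y) = y := by
  rw [← hT.2.2, neg_add_cancel, hT.2.1]

lemma cancel' (hT : IsFlow T) (s : ℝ) (y : Y) : T s (T (-s) y) = y := by
  rw [← hT.2.2, add_neg_cancel, hT.2.1]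

lemma inj (hT : IsFlow T) (s : ℝ) : Function.Injective (T s) := fun a b hab => by
  have h := congrArg (T (-s)) hab
  rwa [cancel hT, cancel hT] at h

lemma img_img (hT : IsFlow T) (a b : ℝ) (M : Set Y) :
    T a '' (T b '' M) = T (a + b) '' M := by
  rw [Set.image_image]
  exact Set.image_congr fun y _ => (hT.2.2 a b y).symm

lemma img_zero (hT : IsFlow T) (M : Set Y) : T 0 '' M = M := by
  have h : T 0 = id := funext hT.2.1
  rw [h, Set.image_id]

end FlowAux

/-- Let `(Y, T)` be a minimal continuous flow, `t > 0` with the time-`1/t` map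
not minimal, and `M` a nonempty proper closed subset of `Y` that is minimal for `T^{1/t}`. Then
there is `t₀ > 0` such that (i) `{s : T^s M = M} = t₀ ℤ`; (ii) the sets `T^s M`, `0 ≤ s < t₀`,
are pairwise disjoint with union `Y`; (iii) `1/t₀` is an eigenvalue of `(Y, T)`; and
(iv) `1/t = m * t₀` for some nonzero integer `m`. -/
theorem minimal_subset_structure {Y : Type*} [MetricSpace Y] [CompactSpace Y] [Nonempty Y]
    (T : ℝ → Y → Y) (hT : IsFlow T) (hmin : IsMinimalFlow T)
    (t : ℝ) (ht : 0 < t) (h : ¬ IsMinimalMap (T (1 / t)))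
    (M : Set Y) (hMne : M.Nonempty) (hMproper : M ≠ univ) (hMclosed : IsClosed M)
    (hMmin : IsMinimalSubset (T (1 / t)) M) :
    ∃ t₀ : ℝ, 0 < t₀ ∧
      ({s : ℝ | T s '' M = M} = {s : ℝ | ∃ m : ℤ, s = (m : ℝ) * t₀}) ∧
      ((∀ s₁ ∈ Ico (0 : ℝ) t₀, ∀ s₂ ∈ Ico (0 : ℝ) t₀, s₁ ≠ s₂ →
          Disjoint (T s₁ '' M) (T s₂ '' M)) ∧
        (⋃ s ∈ Ico (0 : ℝ) t₀, T s '' M) = univ) ∧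
      (1 / t₀ ∈ Eigenvalues T) ∧
      (∃ m : ℤ, m ≠ 0 ∧ 1 / t = (m : ℝ) * t₀) := by
  classical
  have htne : (1:ℝ)/t ≠ 0 := one_div_ne_zero ht.ne'
  have hMcomp : IsCompact M := hMclosed.isCompact
  have hg : T (1/t) '' M = M := hMmin.2.2.1
  have himgcomp : ∀ u : ℝ, IsCompact (T u '' M) := fun u => hMcomp.image (FlowAux.contT hT u)
  -- key fact: nonempty intersection with M forces equality
  have keyA : ∀ u : ℝ, (T u '' M ∩ M).Nonempty → M ⊆ T u '' M := by
    intro u hne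
    have hsub : T u '' M ∩ M ⊆ M := inter_subset_right
    have hcl : IsClosed (T u '' M ∩ M) := (himgcomp u).isClosed.inter hMclosed
    have hginv : T (1/t) '' (T u '' M ∩ M) = T u '' M ∩ M := by
      rw [Set.image_inter (FlowAux.inj hT _), hg]
      congr 1
      rw [FlowAux.img_img hT, add_comm, ← FlowAux.img_img hT, hg]
    rcases eq_or_ne (T u '' M ∩ M) M with hNM | hNM
    · intro x hx
      exact (show x ∈ T u '' M ∩ M from hNM.symm ▸ hx).1
    · exact absurd hginv (hMmin.2.2.2 _ hsub hne hNM hcl)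
  have key : ∀ u : ℝ, (T u '' M ∩ M).Nonempty → T u '' M = M := by
    intro u hne
    have h1 : M ⊆ T u '' M := keyA u hne
    have hne' : (T (-u) '' M ∩ M).Nonempty := by
      obtain ⟨y, ⟨m, hm, rfl⟩, hyM⟩ := hne
      exact ⟨m, ⟨T u m, hyM, FlowAux.cancel hT u m⟩, hm⟩
    have h2 : M ⊆ T (-u) '' M := keyA _ hne'
    have h3 : T u '' M ⊆ M := by
      rintro _ ⟨m, hm, rfl⟩
      obtain ⟨m', hm', hmm⟩ := h2 hm
      rw [← hmm, FlowAux.cancel' hT]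
      exact hm'
    exact h3.antisymm h1
  set S : Set ℝ := {s : ℝ | T s '' M = M} with hSdef
  have hS0 : (0:ℝ) ∈ S := FlowAux.img_zero hT M
  have hSadd : ∀ a ∈ S, ∀ b ∈ S, a + b ∈ S := by
    intro a ha b hb
    show T (a+b) '' M = M
    rw [← FlowAux.img_img hT a b M, hb, ha]
  have hSneg : ∀ a ∈ S, -a ∈ S := by
    intro a ha
    show T (-a) '' M = M
    conv_lhs => rw [← ha]
    rw [FlowAux.img_img hT, neg_add_cancel, FlowAux.img_zero hT]
  have hSclosed : IsClosed S := by
    rw [← isSeqClosed_iff_isClosed]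
    have sub : ∀ (x : ℕ → ℝ) (l : ℝ), (∀ n, x n ∈ S) →
        Filter.Tendsto x Filter.atTop (nhds l) → T l '' M ⊆ M := by
      intro x l hx hlim
      rintro _ ⟨m, hm, rfl⟩
      have hcont : Filter.Tendsto (fun n => T (x n) m) Filter.atTop (nhds (T l m)) :=
        ((FlowAux.contY hT m).tendsto l).comp hlim
      have hmem : ∀ n, T (x n) m ∈ M := fun n => (hx n) ▸ mem_image_of_mem _ hm
      exact hMclosed.mem_of_tendsto hcont (Filter.Eventually.of_forall hmem)
    intro x l hx hlim
    have h1 := sub x l hx hlim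
    have h2 := sub (fun n => -(x n)) (-l) (fun n => hSneg _ (hx n)) hlim.neg
    show T l '' M = M
    refine h1.antisymm fun y hy => ?_
    exact ⟨T (-l) y, h2 (mem_image_of_mem _ hy), FlowAux.cancel' hT l y⟩
  have h1tS : (1/t) ∈ S := hg
  have hSnotuniv : S ≠ univ := by
    intro hU
    have hfi : FlowInvariant T M := fun s => (hU ▸ mem_univ s : s ∈ S)
    rcases hmin M hMclosed hfi with h' | h'
    · exact hMne.ne_empty h'
    · exact hMproper h'
  let Ssub : AddSubgroup ℝ :=
    { carrier := S
      zero_mem' := hS0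
      add_mem' := fun ha hb => hSadd _ ha _ hb
      neg_mem' := fun ha => hSneg _ ha }
  rcases AddSubgroup.dense_or_cyclic Ssub with hd | ⟨a, ha⟩
  · exfalso
    have : S = univ := by
      rw [← hSclosed.closure_eq]
      exact hd.closure_eq
    exact hSnotuniv this
  · have hamem : ∀ x : ℝ, x ∈ S ↔ ∃ n : ℤ, n • a = x := by
      intro x
      constructor
      · intro hx
        have hx' : x ∈ Ssub := hx
        rw [ha] at hx'
        exact AddSubgroup.mem_closure_singleton.mp hx'
      · rintro ⟨n, hn⟩
        have hx' : x ∈ Ssub := by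
          rw [ha]
          exact AddSubgroup.mem_closure_singleton.mpr ⟨n, hn⟩
        exact hx'
    have hane : a ≠ 0 := by
      rintro rfl
      obtain ⟨n, hn⟩ := (hamem _).mp h1tS
      rw [smul_zero] at hn
      exact htne hn.symm
    set t₀ : ℝ := |a| with ht₀def
    have ht₀pos : 0 < t₀ := abs_pos.mpr hane
    have hSmem : ∀ x : ℝ, x ∈ S ↔ ∃ k : ℤ, x = (k:ℝ) * t₀ := by
      intro x
      rw [hamem]
      constructor
      · rintro ⟨n, rfl⟩
        rcases abs_cases a with ⟨h1, _⟩ | ⟨h1, _⟩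
        · exact ⟨n, by rw [ht₀def, h1, zsmul_eq_mul]⟩
        · exact ⟨-n, by rw [ht₀def, h1, zsmul_eq_mul]; push_cast; ring⟩
      · rintro ⟨k, rfl⟩
        rcases abs_cases a with ⟨h1, _⟩ | ⟨h1, _⟩
        · exact ⟨k, by rw [ht₀def, h1, zsmul_eq_mul]⟩
        · exact ⟨-k, by rw [ht₀def, h1, zsmul_eq_mul]; push_cast; ring⟩
    have hpart1 : S = {s : ℝ | ∃ m : ℤ, s = (m : ℝ) * t₀} := Set.ext fun x => hSmem x
    have hred : ∀ u : ℝ, ∃ (r : ℝ) (k : ℤ), u = r + (k:ℝ) * t₀ ∧ 0 ≤ r ∧ r < t₀ := by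
      intro u
      exact ⟨u - ⌊u / t₀⌋ * t₀, ⌊u / t₀⌋, by ring,
        Int.sub_floor_div_mul_nonneg u ht₀pos, Int.sub_floor_div_mul_lt u ht₀pos⟩
    -- disjointness
    have hdisj : ∀ s₁ ∈ Ico (0:ℝ) t₀, ∀ s₂ ∈ Ico (0:ℝ) t₀, s₁ ≠ s₂ →
        Disjoint (T s₁ '' M) (T s₂ '' M) := by
      intro s₁ hs₁ s₂ hs₂ hne12
      rw [Set.disjoint_left]
      rintro y ⟨m₁, hm₁, hy1⟩ ⟨m₂, hm₂, hy2⟩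
      have h' : T (s₂ - s₁) m₂ = m₁ := by
        rw [show s₂ - s₁ = -s₁ + s₂ by ring, hT.2.2, hy2, ← hy1, FlowAux.cancel hT]
      have hint : (T (s₂ - s₁) '' M ∩ M).Nonempty := ⟨m₁, ⟨m₂, hm₂, h'⟩, hm₁⟩
      obtain ⟨k, hk⟩ := (hSmem _).mp (key _ hint)
      rcases eq_or_ne k 0 with rfl | hk0
      · push_cast at hk
        exact hne12 (by linarith)
      · have h1k : (1:ℝ) ≤ |(k:ℝ)| := by exact_mod_cast Int.one_le_abs hk0
        have habs : |s₂ - s₁| < t₀ := by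
          rw [abs_lt]
          constructor
          · linarith [hs₁.1, hs₁.2, hs₂.1, hs₂.2]
          · linarith [hs₁.1, hs₁.2, hs₂.1, hs₂.2]
        rw [hk, abs_mul, abs_of_pos ht₀pos] at habs
        nlinarith
    -- the union
    have hcont2 : Continuous fun p : ℝ × Y => T p.1 p.2 := FlowAux.cont2 hT
    set K : Set Y := (fun p : ℝ × Y => T p.1 p.2) '' (Icc 0 t₀ ×ˢ M) with hKdef
    have hKcomp : IsCompact K := (isCompact_Icc.prod hMcomp).image hcont2
    have hKfwd : ∀ (u : ℝ) (y : Y), y ∈ K → T u y ∈ K := by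
      intro u y hy
      obtain ⟨⟨s, m⟩, ⟨hs, hm⟩, rfl⟩ := hy
      obtain ⟨r, k, huk, hr0, hrt⟩ := hred (u + s)
      have hm' : T ((k:ℝ) * t₀) m ∈ M := by
        have hks : T ((k:ℝ)*t₀) '' M = M := (hSmem _).mpr ⟨k, rfl⟩
        rw [← hks]
        exact mem_image_of_mem _ hm
      refine ⟨(r, T ((k:ℝ)*t₀) m), ⟨⟨hr0, hrt.le⟩, hm'⟩, ?_⟩
      show T r (T ((k:ℝ)*t₀) m) = T u (T s m)
      rw [← hT.2.2, ← hT.2.2, ← huk]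
    have hKinv : FlowInvariant T K := by
      intro u
      apply Set.Subset.antisymm
      · rintro _ ⟨y, hy, rfl⟩
        exact hKfwd u y hy
      · intro y hy
        exact ⟨T (-u) y, hKfwd (-u) y hy, FlowAux.cancel' hT u y⟩
    have hKne : K.Nonempty := by
      obtain ⟨m₀, hm₀⟩ := hMne
      exact ⟨m₀, ⟨(0, m₀), ⟨⟨le_refl 0, ht₀pos.le⟩, hm₀⟩, hT.2.1 m₀⟩⟩
    have hKuniv : K = univ := by
      rcases hmin K hKcomp.isClosed hKinv with h' | h'
      · exact absurd h' hKne.ne_empty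
      · exact h'
    have hT₀M : T t₀ '' M = M := (hSmem t₀).mpr ⟨1, by push_cast; ring⟩
    have hunion : (⋃ s ∈ Ico (0:ℝ) t₀, T s '' M) = univ := by
      rw [Set.eq_univ_iff_forall]
      intro y
      have hyK : y ∈ K := hKuniv ▸ mem_univ y
      obtain ⟨⟨s, m⟩, ⟨⟨hs0, hst⟩, hm⟩, rfl⟩ := hyK
      rcases lt_or_eq_of_le hst with hlt | heq
      · exact mem_biUnion ⟨hs0, hlt⟩ (mem_image_of_mem _ hm)
      · subst heq
        refine mem_biUnion ⟨le_refl (0:ℝ), ht₀pos⟩ ?_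
        rw [FlowAux.img_zero hT, ← hT₀M]
        exact mem_image_of_mem _ hm
    -- the eigenvector
    have hAcomp : IsCompact ((Icc (0:ℝ) t₀) ×ˢ M) := isCompact_Icc.prod hMcomp
    haveI : CompactSpace ((Icc (0:ℝ) t₀) ×ˢ M : Set (ℝ × Y)) :=
      isCompact_iff_compactSpace.mp hAcomp
    set p : ((Icc (0:ℝ) t₀) ×ˢ M : Set (ℝ × Y)) → Y := fun a => T a.1.1 a.1.2 with hpdef
    have hpc : Continuous p := hcont2.comp continuous_subtype_val
    have hpsurj : Function.Surjective p := by
      intro y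
      have hyK : y ∈ K := hKuniv ▸ mem_univ y
      obtain ⟨q, hq, hqy⟩ := hyK
      exact ⟨⟨q, hq⟩, hqy⟩
    have hquot : Topology.IsQuotientMap p := (hpc.isClosedMap).isQuotientMap hpc hpsurj
    set e : ℝ → ℂ := fun s => Complex.exp (2 * (Real.pi:ℂ) * Complex.I * ((1/t₀ : ℝ) : ℂ) * (s:ℂ))
      with hedef
    have ht₀C : (t₀:ℂ) ≠ 0 := Complex.ofReal_ne_zero.mpr ht₀pos.ne'
    have he_add : ∀ u s : ℝ, e (u + s) = e u * e s := by
      intro u s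
      rw [hedef]
      simp only
      rw [← Complex.exp_add]
      congr 1
      push_cast
      ring
    have he_per : ∀ (s : ℝ) (k : ℤ), e (s + (k:ℝ) * t₀) = e s := by
      intro s k
      have h1 : e ((k:ℝ) * t₀) = 1 := by
        rw [hedef]
        simp only
        rw [show 2 * (Real.pi:ℂ) * Complex.I * ((1/t₀ : ℝ) : ℂ) * ((((k:ℝ) * t₀ : ℝ)):ℂ)
            = (k:ℂ) * (2 * (Real.pi:ℂ) * Complex.I) by push_cast; field_simp]
        exact Complex.exp_int_mul_two_pi_mul_I k
      rw [he_add, h1, mul_one]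
    have he_abs : ∀ s : ℝ, ‖e s‖ = 1 := by
      intro s
      rw [hedef]
      simp only
      rw [show 2 * (Real.pi:ℂ) * Complex.I * ((1/t₀ : ℝ) : ℂ) * (s:ℂ)
          = ((2*Real.pi*(1/t₀)*s : ℝ):ℂ) * Complex.I by push_cast; ring]
      exact Complex.norm_exp_ofReal_mul_I _
    have hfiber : ∀ a b : ((Icc (0:ℝ) t₀) ×ˢ M : Set (ℝ × Y)), p a = p b →
        e a.1.1 = e b.1.1 := by
      rintro ⟨⟨s, m⟩, hsm⟩ ⟨⟨s', m'⟩, hsm'⟩ hab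
      have hm : m ∈ M := hsm.2
      have hm' : m' ∈ M := hsm'.2
      have hab' : T s m = T s' m' := hab
      have hrel : T (s' - s) m' = m := by
        rw [show s' - s = -s + s' by ring, hT.2.2, ← hab', FlowAux.cancel hT]
      have hint : (T (s' - s) '' M ∩ M).Nonempty := ⟨m, ⟨m', hm', hrel⟩, hm⟩
      obtain ⟨k, hk⟩ := (hSmem _).mp (key _ hint)
      show e s = e s'
      rw [show s' = s + (k:ℝ) * t₀ by linarith, he_per]
    choose σ hσ using hpsurj
    set χ : Y → ℂ := fun y => e ((σ y : ℝ × Y)).1 with hχdef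
    have hχp : ∀ a, χ (p a) = e a.1.1 := fun a => hfiber _ a (hσ (p a))
    have he_cont : Continuous e := by
      rw [hedef]
      exact Complex.continuous_exp.comp (continuous_const.mul Complex.continuous_ofReal)
    have hχcont : Continuous χ := by
      rw [hquot.continuous_iff]
      have hcomp : (χ ∘ p) = fun a => e a.1.1 := funext fun a => hχp a
      rw [hcomp]
      exact he_cont.comp (continuous_fst.comp continuous_subtype_val)
    have hχabs : ∀ y, ‖χ y‖ = 1 := fun y => he_abs _
    have hχeig : ∀ (y : Y) (u : ℝ), χ (T u y) = e u * χ y := by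
      intro y u
      obtain ⟨a, hpy⟩ : ∃ a, p a = y := ⟨σ y, hσ y⟩
      obtain ⟨⟨s, m⟩, hsm⟩ := a
      have hm : m ∈ M := hsm.2
      subst hpy
      obtain ⟨r, k, huk, hr0, hrt⟩ := hred (u + s)
      have hm' : T ((k:ℝ) * t₀) m ∈ M := by
        have hks : T ((k:ℝ)*t₀) '' M = M := (hSmem _).mpr ⟨k, rfl⟩
        rw [← hks]
        exact mem_image_of_mem _ hm
      have hb : ((r, T ((k:ℝ)*t₀) m) : ℝ × Y) ∈ (Icc (0:ℝ) t₀) ×ˢ M := ⟨⟨hr0, hrt.le⟩, hm'⟩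
      have hTeq : T u (p ⟨(s,m), hsm⟩) = p ⟨(r, T ((k:ℝ)*t₀) m), hb⟩ := by
        show T u (T s m) = T r (T ((k:ℝ)*t₀) m)
        rw [← hT.2.2, ← hT.2.2, huk]
      rw [hTeq, hχp, hχp]
      show e r = e u * e s
      rw [show r = (u + s) + ((-k : ℤ):ℝ) * t₀ by push_cast; linarith, he_per, he_add]
    refine ⟨t₀, ht₀pos, hpart1, ⟨hdisj, hunion⟩, ⟨χ, hχcont, hχabs, ?_⟩, ?_⟩
    · intro y u
      rw [hχeig y u, hedef]
    · obtain ⟨k, hk⟩ := (hSmem _).mp h1tS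
      refine ⟨k, ?_, hk⟩
      rintro rfl
      push_cast at hk
      rw [zero_mul] at hk
      exact htne hk
end

section
/- Let (X,S) be a minimal dynamical system and let (Y,T) be the standard suspension of S. Then Λ(X,S) = φ(Λ(Y,T)), where φ : ℝ → S¹ is the canonical map φ(x) = e^{2πix}. That is, e^{2πiλ} is an eigenvalue of the dynamical system (X,S) if and only if there exists an eigenvalue λ' ∈ Λ(Y,T) of the flow with e^{2πiλ'} = e^{2πiλ}. -/
open Set

/-- The identification `(x, s) ∼ (Sⁿ x, s - n)` defining the standard suspension of `(X, S)`. -/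
def SuspRel {X : Type*} (S : Equiv.Perm X) (p q : X × ℝ) : Prop :=
  ∃ n : ℤ, q.1 = (S ^ n) p.1 ∧ q.2 = p.2 - n

/-- The standard suspension space of `(X, S)`, with the quotient topology. -/
abbrev Susp {X : Type*} (S : Equiv.Perm X) : Type _ := Quot (SuspRel S)

/-- The suspension flow: the time-`t` map `T^t [x, s] = [x, s + t]` on the standard
suspension of `(X, S)`. -/
def suspT {X : Type*} (S : Equiv.Perm X) (t : ℝ) : Susp S → Susp S :=
  Quot.map (fun p => (p.1, p.2 + t)) (by
    rintro ⟨x, s⟩ ⟨y, u⟩ ⟨n, h1, h2⟩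
    exact ⟨n, h1, by dsimp at h2 ⊢; linarith⟩)

/-- The set `Λ(X, S)` of eigenvalues of a dynamical system `(X, S)`: unit complex numbers `c`
such that `χ ∘ S = c • χ` for some continuous unit-circle valued `χ : X → S¹`. -/
def DiscreteEigenvalues {X : Type*} [TopologicalSpace X] (S : X → X) : Set ℂ :=
  {c : ℂ | ∃ χ : X → ℂ, Continuous χ ∧ (∀ x, ‖χ x‖ = 1) ∧ ∀ x, χ (S x) = c * χ x}

lemma chi_zpow {X : Type*} (S : Equiv.Perm X) (χ : X → ℂ) (c : ℂ) (hc : c ≠ 0)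
    (h : ∀ x, χ (S x) = c * χ x) : ∀ (n : ℤ) (x : X), χ ((S ^ n) x) = c ^ n * χ x := by
  have hinv : ∀ y, χ (S.symm y) = c⁻¹ * χ y := by
    intro y
    have := h (S.symm y)
    rw [Equiv.apply_symm_apply] at this
    rw [this]
    field_simp
  intro n
  induction n using Int.induction_on with
  | zero => intro x; simp
  | succ k ih =>
      intro x
      have hstep : (S ^ ((k : ℤ) + 1)) x = (S ^ (k : ℤ)) (S x) := by
        rw [zpow_add_one S (k : ℤ)]
        rfl
      rw [hstep, ih, h, zpow_add_one₀ hc]; ring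
  | pred k ih =>
      intro x
      have hstep : (S ^ (-(k : ℤ) - 1)) x = (S ^ (-(k : ℤ))) (S.symm x) := by
        have : (S ^ (-(k : ℤ))) = (S ^ (-(k : ℤ) - 1)) * S := by
          rw [← zpow_add_one S (-(k : ℤ) - 1), sub_add_cancel]
        rw [this, Equiv.Perm.mul_apply, Equiv.apply_symm_apply]
      rw [hstep, ih, hinv, zpow_sub_one₀ hc]; ring

/-- For a minimal dynamical system `(X, S)` with standard suspension `(Y, T)`,
one has `Λ(X, S) = φ(Λ(Y, T))` where `φ(x) = e^{2πix}`. -/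
theorem discreteEigenvalues_eq_image_eigenvalues {X : Type*} [MetricSpace X] [CompactSpace X]
    [Nonempty X] (S : Equiv.Perm X) (hS : Continuous S) (hS' : Continuous S.symm)
    (hmin : IsMinimalMap (⇑S)) :
    DiscreteEigenvalues (⇑S)
      = (fun l : ℝ => Complex.exp (2 * Real.pi * Complex.I * l)) '' Eigenvalues (suspT S) := by
  ext c
  constructor
  · rintro ⟨χ, hχc, hχ1, hχS⟩
    -- c has modulus 1
    have hx0 : ∃ x : X, True := ⟨Classical.arbitrary X, trivial⟩
    obtain ⟨x0, -⟩ := hx0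
    have habs : ‖c‖ = 1 := by
      have := hχ1 (S x0)
      rw [hχS] at this
      have h2 := hχ1 x0
      rw [norm_mul, h2, mul_one] at this
      exact this
    have hc0 : c ≠ 0 := by
      intro h; rw [h] at habs; simp at habs
    set l : ℝ := Complex.arg c / (2 * Real.pi) with hl
    have hexp : Complex.exp (2 * Real.pi * Complex.I * l) = c := by
      have hpi : (2 * Real.pi : ℝ) ≠ 0 := by positivity
      have hlr : l * (2 * Real.pi) = Complex.arg c := by
        rw [hl]; field_simp
      have hl2 : ((l : ℂ)) * (2 * Real.pi) = ((Complex.arg c : ℝ) : ℂ) := by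
        exact_mod_cast hlr
      have : (2 * Real.pi * Complex.I * l : ℂ) = (Complex.arg c) * Complex.I := by
        rw [← hl2]; ring
      rw [this]
      have := Complex.norm_mul_exp_arg_mul_I c
      rwa [habs, Complex.ofReal_one, one_mul] at this
    refine ⟨l, ?_, hexp⟩
    -- build eigenvector on the suspension
    have hcn : ∀ (n : ℤ) (x : X), χ ((S ^ n) x) = c ^ n * χ x := chi_zpow S χ c hc0 hχS
    set f : X × ℝ → ℂ := fun p => Complex.exp (2 * Real.pi * Complex.I * l * p.2) * χ p.1 with hf
    have hresp : ∀ p q : X × ℝ, SuspRel S p q → f p = f q := by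
      rintro ⟨x, s⟩ ⟨y, u⟩ ⟨n, h1, h2⟩
      dsimp at h1 h2
      subst h1; subst h2
      simp only [hf]
      rw [hcn n x]
      have hcpow : (c : ℂ) ^ n = Complex.exp (2 * Real.pi * Complex.I * l * n) := by
        rw [← hexp, ← Complex.exp_int_mul]; ring_nf
      rw [hcpow, ← mul_assoc, ← Complex.exp_add]
      push_cast
      ring_nf
    refine ⟨Quot.lift f hresp, ?_, ?_, ?_⟩
    · exact continuous_quot_lift hresp
        ((Complex.continuous_exp.comp (by continuity)).mul (hχc.comp continuous_fst))
    · rintro ⟨x, s⟩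
      simp only [hf, Quot.lift_mk (f := f)]
      rw [norm_mul, Complex.norm_exp, hχ1, mul_one]
      norm_num [Complex.mul_re]
    · rintro ⟨x, s⟩ t
      show f (x, s + t) = _ * f (x, s)
      simp only [hf]
      rw [← mul_assoc, ← Complex.exp_add]
      push_cast
      ring_nf
  · rintro ⟨l, ⟨χ, hχc, hχ1, hχT⟩, rfl⟩
    refine ⟨fun x => χ (Quot.mk _ (x, 0)), hχc.comp ((continuous_quot_mk).comp
      (by continuity)), fun x => hχ1 _, fun x => ?_⟩
    have h1 : Quot.mk (SuspRel S) (x, (1 : ℝ)) = Quot.mk (SuspRel S) (S x, 0) := by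
      apply Quot.sound
      exact ⟨1, by simp, by norm_num⟩
    have h2 : suspT S 1 (Quot.mk (SuspRel S) (x, 0)) = Quot.mk (SuspRel S) (x, (1 : ℝ)) := by
      show Quot.mk _ (x, (0 : ℝ) + 1) = _
      norm_num
    calc χ (Quot.mk _ (S x, 0)) = χ (suspT S 1 (Quot.mk (SuspRel S) (x, 0))) := by
          rw [h2, h1]
      _ = _ := by rw [hχT]; norm_num
end

section
/- Let (X₁,S₁) be an almost one-to-one extension of (X₂,S₂). Then S₁ is minimal if and only if S₂ is minimal. -/
open Set

/-- If `(X₁, S₁)` is an almost one-to-one extension of `(X₂, S₂)`, then `S₁` is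
minimal if and only if `S₂` is minimal. -/
theorem minimal_iff_of_almost_one_to_one {X₁ X₂ : Type*} [MetricSpace X₁] [CompactSpace X₁]
    [MetricSpace X₂] [CompactSpace X₂]
    (S₁ : Equiv.Perm X₁) (hS₁ : Continuous S₁) (hS₁' : Continuous S₁.symm)
    (S₂ : Equiv.Perm X₂) (hS₂ : Continuous S₂) (hS₂' : Continuous S₂.symm)
    (F : X₁ → X₂) (hFc : Continuous F) (hFs : Function.Surjective F)
    (hFcomm : ∀ x, F (S₁ x) = S₂ (F x))
    (hF11 : Dense {x : X₁ | F ⁻¹' {F x} = {x}}) :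
    IsMinimalMap (⇑S₁) ↔ IsMinimalMap (⇑S₂) := by
  constructor
  · intro h1 M hM hSM
    have hpre : ⇑S₁ '' (F ⁻¹' M) = F ⁻¹' M := by
      ext x
      constructor
      · rintro ⟨y, hy, rfl⟩
        simp only [mem_preimage] at *
        rw [hFcomm, ← hSM]
        exact ⟨F y, hy, rfl⟩
      · intro hx
        refine ⟨S₁.symm x, ?_, S₁.apply_symm_apply x⟩
        simp only [mem_preimage] at *
        have he : F x = S₂ (F (S₁.symm x)) := by
          rw [← hFcomm, S₁.apply_symm_apply]
        have h2 : S₂ (F (S₁.symm x)) ∈ M := he ▸ hx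
        rw [← hSM] at h2
        obtain ⟨z, hz, hz2⟩ := h2
        rwa [S₂.injective hz2] at hz
    rcases h1 (F ⁻¹' M) (hM.preimage hFc) hpre with h | h
    · left
      ext y
      simp only [mem_empty_iff_false, iff_false]
      intro hy
      obtain ⟨x, rfl⟩ := hFs y
      exact absurd (show x ∈ F ⁻¹' M from hy) (by simp [h])
    · right
      ext y
      simp only [mem_univ, iff_true]
      obtain ⟨x, rfl⟩ := hFs y
      exact (show x ∈ F ⁻¹' M by rw [h]; trivial)
  · intro h2 M hM hSM
    by_cases hMe : M = ∅
    · left; exact hMe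
    right
    have hne : M.Nonempty := nonempty_iff_ne_empty.2 hMe
    have hFM : IsClosed (F '' M) := (hM.isCompact.image hFc).isClosed
    have hS2FM : ⇑S₂ '' (F '' M) = F '' M := by
      rw [← image_comp]
      have hcc : (⇑S₂ ∘ F) = F ∘ ⇑S₁ := by ext x; simp [hFcomm]
      rw [hcc, image_comp, hSM]
    rcases h2 (F '' M) hFM hS2FM with h | h
    · exact absurd h (by simp [nonempty_iff_ne_empty.1 (hne.image F)])
    · have hsub : {x : X₁ | F ⁻¹' {F x} = {x}} ⊆ M := by
        intro x hx
        have hx' : F x ∈ F '' M := by rw [h]; trivial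
        obtain ⟨m, hm, hm2⟩ := hx'
        have hmm : m ∈ F ⁻¹' {F x} := by simp [hm2]
        rw [hx] at hmm
        rwa [← hmm]
      apply eq_univ_of_univ_subset
      calc univ = closure {x : X₁ | F ⁻¹' {F x} = {x}} := hF11.closure_eq.symm
        _ ⊆ closure M := closure_mono hsub
        _ = M := hM.closure_eq
end

section
/- Let (X₁,S₁) be an almost one-to-one extension of (X₂,S₂) with almost one-to-one extension map F : X₁ → X₂, and let (Y₁,T₁) and (Y₂,T₂) be the standard suspensions of S₁ and S₂ respectively. For each t ∈ ℝ, the map F̃ : Y₁ → Y₂ defined by F̃([x,s]) = [F(x), s] is well defined, continuous and surjective, satisfies T₂^t ∘ F̃ = F̃ ∘ T₁^t, and the set {y ∈ Y₁ : F̃⁻¹(F̃(y)) = {y}} is dense in Y₁; that is, (Y₁, T₁^t) is an almost one-to-one extension of (Y₂, T₂^t). -/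
open Set

lemma suspRel_equivalence {X : Type*} (S : Equiv.Perm X) : Equivalence (SuspRel S) := by
  constructor
  · rintro ⟨x, s⟩; exact ⟨0, by simp⟩
  · rintro ⟨x, s⟩ ⟨y, u⟩ ⟨n, h1, h2⟩
    refine ⟨-n, ?_, ?_⟩
    · dsimp at h1 ⊢; simp [zpow_neg, h1]
    · dsimp at h2 ⊢; push_cast; linarith
  · rintro ⟨x, s⟩ ⟨y, u⟩ ⟨z, v⟩ ⟨n, h1, h2⟩ ⟨m, h3, h4⟩
    refine ⟨n + m, ?_, ?_⟩
    · dsimp at h1 h3 ⊢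
      rw [h3, h1, ← Equiv.Perm.mul_apply, ← zpow_add, add_comm]
    · dsimp at h2 h4 ⊢; push_cast; linarith

/-- If `F` is an almost one-to-one extension map from `(X₁, S₁)` onto
`(X₂, S₂)`, then for each `t ∈ ℝ` the induced map `F̃ [x, s] = [F x, s]` between the standard
suspensions is well defined, continuous, surjective, intertwines the time-`t` maps, and is
almost one-to-one; that is, `(Y₁, T₁^t)` is an almost one-to-one extension of `(Y₂, T₂^t)`. -/
theorem suspension_almost_one_to_one {X₁ X₂ : Type*} [MetricSpace X₁] [CompactSpace X₁]
    [MetricSpace X₂] [CompactSpace X₂]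
    (S₁ : Equiv.Perm X₁) (hS₁ : Continuous S₁) (hS₁' : Continuous S₁.symm)
    (S₂ : Equiv.Perm X₂) (hS₂ : Continuous S₂) (hS₂' : Continuous S₂.symm)
    (F : X₁ → X₂) (hFc : Continuous F) (hFs : Function.Surjective F)
    (hFcomm : ∀ x, F (S₁ x) = S₂ (F x))
    (hF11 : Dense {x : X₁ | F ⁻¹' {F x} = {x}}) (t : ℝ) :
    ∃ Ft : Susp S₁ → Susp S₂,
      (∀ p : X₁ × ℝ, Ft (Quot.mk (SuspRel S₁) p) = Quot.mk (SuspRel S₂) (F p.1, p.2)) ∧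
      Continuous Ft ∧ Function.Surjective Ft ∧
      (∀ y : Susp S₁, suspT S₂ t (Ft y) = Ft (suspT S₁ t y)) ∧
      Dense {y : Susp S₁ | Ft ⁻¹' {Ft y} = {y}} := by
  -- commuting with integer powers
  have hcomm : ∀ (n : ℤ) (x : X₁), F ((S₁ ^ n) x) = (S₂ ^ n) (F x) := by
    have hinv : ∀ x, F (S₁.symm x) = S₂.symm (F x) := by
      intro x
      have := hFcomm (S₁.symm x)
      rw [Equiv.apply_symm_apply] at this
      rw [this, Equiv.symm_apply_apply]
    intro n
    induction n using Int.induction_on with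
    | zero => simp
    | succ k ih =>
        intro x
        have : (S₁ ^ ((k : ℤ) + 1)) x = S₁ ((S₁ ^ (k : ℤ)) x) := by
          rw [add_comm, zpow_add, zpow_one, Equiv.Perm.mul_apply]
        rw [this, hFcomm, ih]
        rw [show ((k : ℤ) + 1) = 1 + (k : ℤ) by ring, zpow_add, zpow_one,
          Equiv.Perm.mul_apply]
    | pred k ih =>
        intro x
        have : (S₁ ^ (-(k : ℤ) - 1)) x = S₁.symm ((S₁ ^ (-(k : ℤ))) x) := by
          rw [sub_eq_add_neg, add_comm, zpow_add, Equiv.Perm.mul_apply]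
          simp
        rw [this, hinv, ih]
        rw [show (-(k : ℤ) - 1) = -1 + (-(k : ℤ)) by ring, zpow_add,
          Equiv.Perm.mul_apply]
        simp
  have wd : ∀ p q : X₁ × ℝ, SuspRel S₁ p q →
      Quot.mk (SuspRel S₂) (F p.1, p.2) = Quot.mk (SuspRel S₂) (F q.1, q.2) := by
    rintro ⟨x, s⟩ ⟨y, u⟩ ⟨n, h1, h2⟩
    exact Quot.sound ⟨n, by dsimp at h1 ⊢; rw [h1, hcomm], h2⟩
  refine ⟨Quot.lift (fun p => Quot.mk (SuspRel S₂) (F p.1, p.2)) wd, fun p => rfl, ?_, ?_, ?_, ?_⟩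
  · exact continuous_quot_lift wd ((continuous_quot_mk).comp ((hFc.comp continuous_fst).prodMk continuous_snd))
  · rintro y
    induction y using Quot.ind with
    | _ p =>
      obtain ⟨x, hx⟩ := hFs p.1
      exact ⟨Quot.mk _ (x, p.2), by simp [hx]⟩
  · intro y
    induction y using Quot.ind with
    | _ p => rfl
  · have key : ∀ x : X₁, F ⁻¹' {F x} = {x} → ∀ s : ℝ,
        (Quot.lift (fun p : X₁ × ℝ => Quot.mk (SuspRel S₂) (F p.1, p.2)) wd) ⁻¹'
          {Quot.lift (fun p : X₁ × ℝ => Quot.mk (SuspRel S₂) (F p.1, p.2)) wd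
            (Quot.mk (SuspRel S₁) (x, s))} = {Quot.mk (SuspRel S₁) (x, s)} := by
      intro x hx s
      have hxinj : ∀ y : X₁, F y = F x → y = x := by
        intro y hy
        have : y ∈ F ⁻¹' {F x} := hy
        rw [hx] at this; exact this
      ext z
      induction z using Quot.ind with
      | _ q =>
        simp only [Set.mem_preimage, Set.mem_singleton_iff]
        constructor
        · intro h
          have h' : Quot.mk (SuspRel S₂) (F q.1, q.2) =
              Quot.mk (SuspRel S₂) (F x, s) := h
          rw [Quot.eq] at h'
          rw [(suspRel_equivalence S₂).eqvGen_iff] at h'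
          obtain ⟨n, h1, h2⟩ := h'
          dsimp at h1 h2
          have : F ((S₁ ^ n) q.1) = F x := by rw [hcomm]; exact h1.symm
          have hq := hxinj _ this
          exact (Quot.sound ⟨n, hq.symm, h2⟩)
        · intro h
          exact congrArg (Quot.lift (fun p : X₁ × ℝ =>
            Quot.mk (SuspRel S₂) (F p.1, p.2)) wd) h
    have hsub : (Quot.mk (SuspRel S₁)) ''
        ({x : X₁ | F ⁻¹' {F x} = {x}} ×ˢ (Set.univ : Set ℝ)) ⊆
        {y : Susp S₁ | (Quot.lift (fun p : X₁ × ℝ => Quot.mk (SuspRel S₂) (F p.1, p.2)) wd) ⁻¹'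
          {Quot.lift (fun p : X₁ × ℝ => Quot.mk (SuspRel S₂) (F p.1, p.2)) wd y} = {y}} := by
      rintro z ⟨⟨x, s⟩, ⟨hx, -⟩, rfl⟩
      exact key x hx s
    have hdr : DenseRange (Quot.mk (SuspRel S₁)) := (Quot.mk_surjective).denseRange
    have hdense := hdr.dense_image continuous_quot_mk (hF11.prod dense_univ)
    exact hdense.mono hsub
end

section
/- Let s be an irrational number, let R_s : S¹ → S¹ be the rotation R_s(z) = e^{2πis}·z, and let (Y,T) be the standard suspension of R_s. For each nonzero real number t, the time-(1/t) map T^{1/t} on (Y,T) is minimal if and only if t does not belong to ℚ + sℚ = {r₁ + s·r₂ : r₁, r₂ ∈ ℚ}. -/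
open Set

/-- Rotation by the angle `2πu` on the unit circle `S¹ ⊆ ℂ`, `z ↦ e^{2πiu} z`, as a permutation
of `Circle`. -/
noncomputable def rot (u : ℝ) : Equiv.Perm Circle :=
  Equiv.mulLeft (Circle.exp (2 * Real.pi * u))

noncomputable def Emap (x : ℝ) : Circle := Circle.exp (2 * Real.pi * x)

lemma Emap_add (x y : ℝ) : Emap (x + y) = Emap x * Emap y := by
  simp [Emap, mul_add, Circle.exp_add]

lemma Emap_int (k : ℤ) : Emap k = 1 := by
  simpa [Emap] using Circle.exp_two_pi_mul_int k

lemma Emap_add_int (x : ℝ) (k : ℤ) : Emap (x + k) = Emap x := by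
  rw [Emap_add, Emap_int, mul_one]

lemma Emap_eq_iff {x y : ℝ} : Emap x = Emap y ↔ ∃ m : ℤ, x = y + m := by
  constructor
  · intro h
    rcases Circle.exp_eq_exp.1 h with ⟨m, hm⟩
    refine ⟨m, ?_⟩
    have hπ : (2 * Real.pi) ≠ 0 := by positivity
    have : 2 * Real.pi * x = 2 * Real.pi * (y + m) := by rw [hm]; ring
    exact mul_left_cancel₀ hπ this
  · rintro ⟨m, rfl⟩; rw [Emap_add_int]

lemma Emap_surjective : Function.Surjective Emap := by
  intro z
  refine ⟨Complex.arg z / (2 * Real.pi), ?_⟩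
  have hπ : (2 * Real.pi) ≠ 0 := by positivity
  rw [Emap, mul_div_cancel₀ _ hπ]
  exact Circle.exp_arg z

lemma continuous_Emap : Continuous Emap :=
  Circle.exp.continuous.comp (continuous_const.mul continuous_id)

lemma isOpenMap_Emap : IsOpenMap Emap := by
  have h1 : IsOpenMap Circle.exp := isLocalHomeomorph_circleExp.isOpenMap
  have h2 : IsOpenMap (fun x : ℝ => 2 * Real.pi * x) := by
    have hπ : (2 * Real.pi) ≠ 0 := by positivity
    simpa [Homeomorph.coe_mulLeft₀] using (Homeomorph.mulLeft₀ (2 * Real.pi) hπ).isOpenMap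
  exact h1.comp h2

lemma Emap_neg (x : ℝ) : Emap (-x) = (Emap x)⁻¹ := by
  simp [Emap, mul_neg, Circle.exp_neg]

lemma Emap_zpow (x : ℝ) (n : ℤ) : Emap (n * x) = (Emap x) ^ n := by
  induction n using Int.induction_on with
  | zero => simpa using Emap_int 0
  | succ k ih =>
      have hc : ((((k : ℤ) + 1 : ℤ)) : ℝ) * x = ((k : ℤ) : ℝ) * x + x := by push_cast; ring
      rw [hc, Emap_add, ih, zpow_add_one]
  | pred k ih =>
      have hc : (((-(k : ℤ) - 1 : ℤ)) : ℝ) * x = ((-(k : ℤ) : ℤ) : ℝ) * x + (-x) := by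
        push_cast; ring
      rw [hc, Emap_add, ih, Emap_neg, zpow_sub_one]

/-- The subgroup `ℤ(a,b) + ℤ²` of `ℝ²`. -/
def TT (a b : ℝ) : AddSubgroup (ℝ × ℝ) where
  carrier := {p | ∃ n m k : ℤ, p = (n * a + m, n * b + k)}
  zero_mem' := ⟨0, 0, 0, by simp [Prod.ext_iff]⟩
  add_mem' := by
    rintro p q ⟨n, m, k, rfl⟩ ⟨n', m', k', rfl⟩
    exact ⟨n + n', m + m', k + k', by simp [Prod.ext_iff]; constructor <;> push_cast <;> ring⟩
  neg_mem' := by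
    rintro p ⟨n, m, k, rfl⟩
    exact ⟨-n, -m, -k, by simp [Prod.ext_iff]; constructor <;> push_cast <;> ring⟩

lemma mem_TT {a b : ℝ} (n m k : ℤ) : ((n * a + m, n * b + k) : ℝ × ℝ) ∈ TT a b :=
  ⟨n, m, k, rfl⟩

lemma int_pair_mem_TT {a b : ℝ} (m k : ℤ) : (((m : ℝ), (k : ℝ)) : ℝ × ℝ) ∈ TT a b := by
  simpa using mem_TT (a := a) (b := b) 0 m k

noncomputable def emap (p : ℝ × ℝ) : Circle × Circle := (Emap p.1, Emap p.2)

lemma continuous_emap : Continuous emap :=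
  (continuous_Emap.comp continuous_fst).prodMk (continuous_Emap.comp continuous_snd)

lemma emap_surjective : Function.Surjective emap := by
  rintro ⟨z, w⟩
  obtain ⟨x, hx⟩ := Emap_surjective z
  obtain ⟨y, hy⟩ := Emap_surjective w
  exact ⟨(x, y), by simp [emap, hx, hy]⟩

lemma isOpenMap_emap : IsOpenMap emap :=
  isOpenMap_Emap.prodMap isOpenMap_Emap

lemma emap_eq_iff {p q : ℝ × ℝ} :
    emap p = emap q ↔ ∃ m k : ℤ, p.1 = q.1 + m ∧ p.2 = q.2 + k := by
  constructor
  · intro h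
    rw [Prod.ext_iff] at h
    obtain ⟨m, hm⟩ := Emap_eq_iff.1 h.1
    obtain ⟨k, hk⟩ := Emap_eq_iff.1 h.2
    exact ⟨m, k, hm, hk⟩
  · rintro ⟨m, k, h1, h2⟩
    simp [emap, Prod.ext_iff, h1, h2, Emap_add_int]

lemma not_dense_TT {a b : ℝ} (n m k : ℤ) (h0 : ¬(n = 0 ∧ m = 0))
    (h : (n : ℝ) * a + (m : ℝ) * b = (k : ℝ)) : ¬ Dense (TT a b : Set (ℝ × ℝ)) := by
  intro hd
  set f : ℝ × ℝ → ℝ := fun p => (n : ℝ) * p.1 + (m : ℝ) * p.2 with hfdef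
  have hf : Continuous f := by fun_prop
  have hsub : (TT a b : Set (ℝ × ℝ)) ⊆ f ⁻¹' (range ((↑) : ℤ → ℝ)) := by
    rintro p ⟨n', m', k', rfl⟩
    refine ⟨n' * k + n * m' + m * k', ?_⟩
    simp only [hfdef]
    push_cast
    linear_combination (-(n' : ℝ)) * h
  have hcl : IsClosed (f ⁻¹' (range ((↑) : ℤ → ℝ))) :=
    (Int.isClosedEmbedding_coe_real.isClosed_range).preimage hf
  have hall : ∀ p : ℝ × ℝ, f p ∈ range ((↑) : ℤ → ℝ) := by
    intro p
    have := closure_minimal hsub hcl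
    rw [hd.closure_eq] at this
    exact this (mem_univ p)
  have : ∃ p : ℝ × ℝ, f p = 1/2 := by
    rcases not_and_or.1 h0 with hn | hm
    · refine ⟨(1 / (2 * n), 0), ?_⟩
      have : (n : ℝ) ≠ 0 := Int.cast_ne_zero.2 hn
      simp only [hfdef]
      field_simp
      ring
    · refine ⟨(0, 1 / (2 * m)), ?_⟩
      have : (m : ℝ) ≠ 0 := Int.cast_ne_zero.2 hm
      simp only [hfdef]
      field_simp
      ring
  obtain ⟨p, hp⟩ := this
  obtain ⟨j, hj⟩ := hall p
  rw [hp] at hj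
  have : (2 * j : ℤ) = 1 := by
    have : (2 * j : ℝ) = 1 := by rw [hj]; ring
    exact_mod_cast this
  omega

lemma torus_minimal_of_dense {a b : ℝ} (hd : Dense (TT a b : Set (ℝ × ℝ))) :
    IsMinimalMap (fun z : Circle × Circle => (Emap a * z.1, Emap b * z.2)) := by
  intro M hM hinv
  rcases eq_empty_or_nonempty M with hE | ⟨y, hy⟩
  · exact Or.inl hE
  right
  -- the full orbit of `y` lies in `M`
  have horb : ∀ n : ℤ, ((Emap a) ^ n * y.1, (Emap b) ^ n * y.2) ∈ M := by
    have hfwd : ∀ z ∈ M, (Emap a * z.1, Emap b * z.2) ∈ M := by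
      intro z hz
      rw [← hinv]; exact mem_image_of_mem _ hz
    have hbwd : ∀ z ∈ M, ((Emap a)⁻¹ * z.1, (Emap b)⁻¹ * z.2) ∈ M := by
      intro z hz
      rw [← hinv] at hz
      obtain ⟨x, hx, hxz⟩ := hz
      have h1 : (Emap a)⁻¹ * z.1 = x.1 := by rw [← hxz]; simp [mul_comm, mul_assoc]
      have h2 : (Emap b)⁻¹ * z.2 = x.2 := by rw [← hxz]; simp [mul_comm, mul_assoc]
      rw [h1, h2]
      exact hx
    intro n
    induction n using Int.induction_on with
    | zero => simpa using hy
    | succ k ih =>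
        have := hfwd _ ih
        simpa [zpow_add_one, mul_comm, mul_assoc, mul_left_comm] using this
    | pred k ih =>
        have := hbwd _ ih
        simpa [zpow_sub_one, mul_comm, mul_assoc, mul_left_comm] using this
  -- the orbit is the image of the dense subgroup under a surjective continuous map
  set ψ : ℝ × ℝ → Circle × Circle := fun p => (Emap p.1 * y.1, Emap p.2 * y.2) with hψdef
  have hψc : Continuous ψ := by
    exact ((continuous_Emap.comp continuous_fst).mul continuous_const).prodMk
      ((continuous_Emap.comp continuous_snd).mul continuous_const)
  have hψs : Function.Surjective ψ := by
    rintro ⟨z, w⟩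
    obtain ⟨x, hx⟩ := Emap_surjective (z * y.1⁻¹)
    obtain ⟨x', hx'⟩ := Emap_surjective (w * y.2⁻¹)
    refine ⟨(x, x'), ?_⟩
    simp [hψdef, hx, hx', mul_assoc]
  have himg : ψ '' (TT a b : Set (ℝ × ℝ)) ⊆ M := by
    rintro _ ⟨p, ⟨n, m, k, rfl⟩, rfl⟩
    have h1 : Emap ((n : ℝ) * a + (m : ℝ)) = (Emap a) ^ n := by
      rw [Emap_add_int, Emap_zpow]
    have h2 : Emap ((n : ℝ) * b + (k : ℝ)) = (Emap b) ^ n := by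
      rw [Emap_add_int, Emap_zpow]
    simpa [hψdef, h1, h2] using horb n
  have hdense : Dense (ψ '' (TT a b : Set (ℝ × ℝ))) := by
    have h1 : ψ '' closure (TT a b : Set (ℝ × ℝ)) ⊆ closure (ψ '' (TT a b : Set (ℝ × ℝ))) :=
      image_closure_subset_closure_image hψc
    rw [hd.closure_eq, image_univ, hψs.range_eq] at h1
    exact dense_iff_closure_eq.2 (eq_univ_of_univ_subset h1)
  have : closure (ψ '' (TT a b : Set (ℝ × ℝ))) ⊆ M := closure_minimal himg hM
  rw [hdense.closure_eq] at this
  exact eq_univ_of_univ_subset this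

lemma torus_not_minimal_of_not_dense {a b : ℝ} (hd : ¬ Dense (TT a b : Set (ℝ × ℝ))) :
    ¬ IsMinimalMap (fun z : Circle × Circle => (Emap a * z.1, Emap b * z.2)) := by
  intro hmin
  set H : Set (ℝ × ℝ) := closure (TT a b : Set (ℝ × ℝ)) with hHdef
  have hHsub : ∀ p q : ℝ × ℝ, p ∈ H → q ∈ H → p + q ∈ H := fun p q hp hq =>
    (TT a b).topologicalClosure.add_mem hp hq
  have hHneg : ∀ p : ℝ × ℝ, p ∈ H → -p ∈ H := fun p hp =>
    (TT a b).topologicalClosure.neg_mem hp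
  have hTH : (TT a b : Set (ℝ × ℝ)) ⊆ H := subset_closure
  have hintH : ∀ m k : ℤ, (((m : ℝ), (k : ℝ)) : ℝ × ℝ) ∈ H := fun m k =>
    hTH (int_pair_mem_TT m k)
  have hvH : ((a, b) : ℝ × ℝ) ∈ H := hTH (by simpa using mem_TT 1 0 0)
  set M : Set (Circle × Circle) := emap '' H with hMdef
  -- the complement of M is the image of the complement of H
  have hcompl : emap '' Hᶜ = Mᶜ := by
    apply Subset.antisymm
    · rintro _ ⟨p, hp, rfl⟩
      intro hmem
      obtain ⟨q, hq, hqe⟩ := hmem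
      obtain ⟨m, k, h1, h2⟩ := emap_eq_iff.1 hqe.symm
      have : p = q + ((m : ℝ), (k : ℝ)) := Prod.ext h1 h2
      exact hp (this ▸ hHsub _ _ hq (hintH m k))
    · intro z hz
      obtain ⟨p, rfl⟩ := emap_surjective z
      refine ⟨p, fun hp => hz ⟨p, hp, rfl⟩, rfl⟩
  have hMclosed : IsClosed M := by
    rw [← isOpen_compl_iff, ← hcompl]
    exact isOpenMap_emap _ (isClosed_closure.isOpen_compl)
  have hMinv : (fun z : Circle × Circle => (Emap a * z.1, Emap b * z.2)) '' M = M := by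
    apply Subset.antisymm
    · rintro _ ⟨_, ⟨p, hp, rfl⟩, rfl⟩
      refine ⟨(a, b) + p, hHsub _ _ hvH hp, ?_⟩
      simp [emap, Emap_add]
    · rintro _ ⟨p, hp, rfl⟩
      refine ⟨emap (p - ((a, b) : ℝ × ℝ)), ⟨p - ((a, b) : ℝ × ℝ), ?_, rfl⟩, ?_⟩
      · simpa [sub_eq_add_neg, add_comm] using hHsub _ _ hp (hHneg _ hvH)
      · simp [emap, Prod.ext_iff, ← Emap_add]
  have hMne : M ≠ ∅ := by
    have : emap 0 ∈ M := ⟨0, hTH (TT a b).zero_mem, rfl⟩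
    intro h; rw [h] at this; exact this
  have hMuniv : M ≠ univ := by
    intro h
    apply hd
    rw [dense_iff_closure_eq, ← hHdef]
    apply eq_univ_of_forall
    intro p
    have : emap p ∈ M := h ▸ mem_univ _
    obtain ⟨q, hq, hqe⟩ := this
    obtain ⟨m, k, h1, h2⟩ := emap_eq_iff.1 hqe.symm
    have : p = q + ((m : ℝ), (k : ℝ)) := Prod.ext h1 h2
    exact this ▸ hHsub _ _ hq (hintH m k)
  rcases hmin M hMclosed hMinv with h | h
  · exact hMne h
  · exact hMuniv h

/-- The subgroup `ℤλ + ℤ` of `ℝ`. -/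
def WW (lam : ℝ) : AddSubgroup ℝ where
  carrier := {x | ∃ m k : ℤ, x = m * lam + k}
  zero_mem' := ⟨0, 0, by simp⟩
  add_mem' := by
    rintro x y ⟨m, k, rfl⟩ ⟨m', k', rfl⟩
    exact ⟨m + m', k + k', by push_cast; ring⟩
  neg_mem' := by
    rintro x ⟨m, k, rfl⟩
    exact ⟨-m, -k, by push_cast; ring⟩

lemma irrational_no_int_rel {b : ℝ} (hb : Irrational b) {d z : ℤ} (hd : d ≠ 0)
    (h : (d : ℝ) * b = (z : ℝ)) : False := by
  have hdr : (d : ℝ) ≠ 0 := Int.cast_ne_zero.2 hd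
  refine hb ⟨(z : ℚ) / (d : ℚ), ?_⟩
  push_cast
  rw [div_eq_iff hdr]
  linarith [h]

lemma dense_WW {lam : ℝ} (hl : Irrational lam) : Dense (WW lam : Set ℝ) := by
  rcases AddSubgroup.dense_or_cyclic (WW lam) with h | ⟨c, hc⟩
  · exact h
  · exfalso
    have hlmem : lam ∈ WW lam := ⟨1, 0, by simp⟩
    have h1mem : (1 : ℝ) ∈ WW lam := ⟨0, 1, by simp⟩
    rw [hc] at hlmem h1mem
    obtain ⟨n, hn⟩ := AddSubgroup.mem_closure_singleton.1 hlmem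
    obtain ⟨j, hj⟩ := AddSubgroup.mem_closure_singleton.1 h1mem
    rw [zsmul_eq_mul] at hn hj
    have hj0 : j ≠ 0 := by
      intro h0; rw [h0] at hj; simp at hj
    apply irrational_no_int_rel hl hj0
    rw [mul_comm] at hj
    calc (j : ℝ) * lam = (j : ℝ) * ((n : ℝ) * c) := by rw [hn]
      _ = (n : ℝ) * (c * j) := by ring
      _ = ((n : ℤ) : ℝ) := by rw [hj, mul_one]

lemma exists_line_in_closure {a b : ℝ} (hb : Irrational b) :
    ∃ u : ℝ × ℝ, u ≠ 0 ∧ ∀ c : ℝ, c • u ∈ closure (TT a b : Set (ℝ × ℝ)) := by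
  set H : Set (ℝ × ℝ) := closure (TT a b : Set (ℝ × ℝ)) with hHdef
  -- a sequence of distinct points of `TT a b` in the unit square
  set p : ℕ → ℝ × ℝ := fun n => (Int.fract ((n : ℝ) * a), Int.fract ((n : ℝ) * b)) with hpdef
  have hpT : ∀ n, p n ∈ TT a b := by
    intro n
    refine ⟨(n : ℤ), -⌊(n : ℝ) * a⌋, -⌊(n : ℝ) * b⌋, ?_⟩
    simp only [hpdef, Int.fract, Prod.ext_iff]
    constructor <;> push_cast <;> ring
  have hpinj : Function.Injective p := by
    intro n n' h
    by_contra hne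
    have h2 : Int.fract ((n : ℝ) * b) = Int.fract ((n' : ℝ) * b) := congrArg Prod.snd h
    obtain ⟨z, hz⟩ := Int.fract_eq_fract.1 h2
    refine irrational_no_int_rel hb (d := (n : ℤ) - n') ?_ (z := z) ?_
    · intro h0
      apply hne
      have : (n : ℤ) = (n' : ℤ) := by omega
      exact_mod_cast this
    · push_cast
      linarith [hz]
  have hpK : ∀ n, p n ∈ Icc (0:ℝ) 1 ×ˢ Icc (0:ℝ) 1 := fun n =>
    ⟨⟨Int.fract_nonneg _, (Int.fract_lt_one _).le⟩, ⟨Int.fract_nonneg _, (Int.fract_lt_one _).le⟩⟩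
  obtain ⟨L, _, φ, hφ, hconv⟩ :=
    (isCompact_Icc.prod isCompact_Icc).tendsto_subseq hpK
  -- differences give nonzero elements of `H` tending to `0`
  set h : ℕ → ℝ × ℝ := fun j => p (φ (j + 1)) - p (φ j) with hhdef
  have hhH : ∀ j, h j ∈ H := fun j =>
    subset_closure ((TT a b).sub_mem (hpT _) (hpT _))
  have hhne : ∀ j, h j ≠ 0 := by
    intro j h0
    have : p (φ (j + 1)) = p (φ j) := by
      have := sub_eq_zero.1 h0
      exact this
    have := hpinj this
    exact absurd this (Nat.ne_of_gt (hφ (Nat.lt_succ_self j)))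
  have hh0 : Filter.Tendsto h Filter.atTop (nhds 0) := by
    have h1 : Filter.Tendsto (fun j => p (φ (j + 1))) Filter.atTop (nhds L) :=
      hconv.comp (Filter.tendsto_add_atTop_nat 1)
    simpa [hhdef] using h1.sub hconv
  -- normalize and pass to a subsequence converging on the unit sphere
  set un : ℕ → ℝ × ℝ := fun j => ‖h j‖⁻¹ • h j with hundef
  have hunS : ∀ j, un j ∈ Metric.sphere (0 : ℝ × ℝ) 1 := by
    intro j
    have hn0 : ‖h j‖ ≠ 0 := norm_ne_zero_iff.2 (hhne j)
    simp [hundef, norm_smul, abs_of_nonneg (inv_nonneg.2 (norm_nonneg _)),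
      inv_mul_cancel₀ hn0]
  obtain ⟨u, huS, σ, hσ, hucv⟩ := (isCompact_sphere (0 : ℝ × ℝ) 1).tendsto_subseq hunS
  have hu0 : u ≠ 0 := by
    intro h0
    have : ‖u‖ = 1 := by simpa using huS
    rw [h0] at this; simp at this
  refine ⟨u, hu0, fun c => ?_⟩
  -- `c • u` is a limit of integer multiples of the `h (σ j)`
  have hnormpos : ∀ j, (0 : ℝ) < ‖h (σ j)‖ := fun j => norm_pos_iff.2 (hhne (σ j))
  have hnorm0 : Filter.Tendsto (fun j => ‖h (σ j)‖) Filter.atTop (nhds 0) := by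
    have := (hh0.comp hσ.tendsto_atTop).norm
    simpa using this
  set m : ℕ → ℤ := fun j => ⌊c / ‖h (σ j)‖⌋ with hmdef
  have hcoef : Filter.Tendsto (fun j => (m j : ℝ) * ‖h (σ j)‖) Filter.atTop (nhds c) := by
    apply tendsto_of_tendsto_of_tendsto_of_le_of_le
      (g := fun j => c - ‖h (σ j)‖) (h := fun _ => c)
    · simpa using (tendsto_const_nhds (x := c)).sub hnorm0
    · exact tendsto_const_nhds
    · intro j
      have h1 : c / ‖h (σ j)‖ - 1 < (m j : ℝ) := Int.sub_one_lt_floor _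
      have h2 := hnormpos j
      have := (mul_lt_mul_of_pos_right h1 h2)
      rw [sub_mul, div_mul_cancel₀ _ h2.ne', one_mul] at this
      dsimp only
      linarith
    · intro j
      have h1 : (m j : ℝ) ≤ c / ‖h (σ j)‖ := Int.floor_le _
      have h2 := hnormpos j
      have := mul_le_mul_of_nonneg_right h1 h2.le
      rw [div_mul_cancel₀ _ h2.ne'] at this
      dsimp only
      linarith
  have hterm : ∀ j, (m j : ℝ) • h (σ j) = ((m j : ℝ) * ‖h (σ j)‖) • un (σ j) := by
    intro j
    rw [hundef, smul_smul]
    congr 1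
    rw [mul_assoc, mul_inv_cancel₀ (hnormpos j).ne', mul_one]
  have htend : Filter.Tendsto (fun j => (m j : ℝ) • h (σ j)) Filter.atTop (nhds (c • u)) := by
    simp only [hterm]
    exact hcoef.smul hucv
  have hmemH : ∀ j, (m j : ℝ) • h (σ j) ∈ H := by
    intro j
    rw [Int.cast_smul_eq_zsmul]
    exact (TT a b).topologicalClosure.zsmul_mem (hhH (σ j)) (m j)
  exact isClosed_closure.mem_of_tendsto htend (Filter.Eventually.of_forall hmemH)

lemma rational_dep_of_not_dense {a b : ℝ} (hd : ¬ Dense (TT a b : Set (ℝ × ℝ))) :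
    ∃ n m k : ℤ, ¬(n = 0 ∧ m = 0) ∧ (n : ℝ) * a + (m : ℝ) * b = (k : ℝ) := by
  by_cases hb : Irrational b
  swap
  · rw [Irrational, not_not] at hb
    obtain ⟨q, hq⟩ := hb
    refine ⟨0, (q.den : ℤ), q.num, ?_, ?_⟩
    · rintro ⟨-, h⟩
      exact absurd h (by exact_mod_cast q.den_nz)
    · have hden : ((q.den : ℝ)) ≠ 0 := by exact_mod_cast q.den_nz
      have hb' : b = (q.num : ℝ) / (q.den : ℝ) := by
        rw [← hq]; exact_mod_cast (Rat.num_div_den q).symm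
      rw [hb']
      field_simp
      push_cast; ring
  obtain ⟨u, hu0, hline⟩ := exists_line_in_closure (a := a) hb
  set H : Set (ℝ × ℝ) := closure (TT a b : Set (ℝ × ℝ)) with hHdef
  have hvH : ((a, b) : ℝ × ℝ) ∈ H := subset_closure (by simpa using mem_TT 1 0 0)
  -- find an integer linear dependence on `u`
  have hdep : ∃ A B : ℤ, ¬(A = 0 ∧ B = 0) ∧ (A : ℝ) * u.1 + (B : ℝ) * u.2 = 0 := by
    by_cases hu1 : u.1 = 0
    · exact ⟨1, 0, by simp, by simp [hu1]⟩
    · by_cases hlam : Irrational (u.2 / u.1)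
      · exfalso
        apply hd
        rw [dense_iff_closure_eq]
        apply eq_univ_of_forall
        rintro ⟨x, y⟩
        set lam : ℝ := u.2 / u.1 with hlamdef
        have hsub : ∀ m k : ℤ, ((x, (x - m) * lam + k) : ℝ × ℝ) ∈ H := by
          intro m k
          have h1 := hline ((x - m) / u.1)
          have h2 : ((((x - m) / u.1) • u + ((m : ℝ), (k : ℝ)) : ℝ × ℝ)) ∈ H :=
            (TT a b).topologicalClosure.add_mem h1 (subset_closure (int_pair_mem_TT m k))
          have he : ((((x - m) / u.1) • u + ((m : ℝ), (k : ℝ)) : ℝ × ℝ))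
              = ((x, (x - m) * lam + k) : ℝ × ℝ) := by
            have e1 : (x - m) / u.1 * u.1 + m = x := by field_simp; ring
            have e2 : (x - m) / u.1 * u.2 + k = (x - m) * lam + k := by
              rw [hlamdef]; field_simp
            exact Prod.ext (by simpa using e1) (by simpa using e2)
          rwa [he] at h2
        -- the second coordinates are dense in `ℝ`
        have hDset : Dense ((fun z => x * lam + z) '' (WW lam : Set ℝ)) :=
          DenseRange.dense_image
            (Function.Surjective.denseRange (fun z => ⟨z - x * lam, by ring⟩))
            (continuous_const.add continuous_id) (dense_WW hlam)
        have hsub2 : {x} ×ˢ ((fun z => x * lam + z) '' (WW lam : Set ℝ)) ⊆ H := by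
          rintro ⟨x', z⟩ ⟨hx1, hx2⟩
          simp only [mem_singleton_iff] at hx1
          obtain ⟨-, ⟨m, k, rfl⟩, rfl⟩ := hx2
          rw [hx1]
          have := hsub (-m) k
          have he : (x - (-m : ℤ)) * lam + k = x * lam + ((m : ℝ) * lam + k) := by
            push_cast; ring
          rwa [he] at this
        have hyc : ((x, y) : ℝ × ℝ) ∈ closure ({x} ×ˢ ((fun z => x * lam + z) '' (WW lam : Set ℝ))) := by
          rw [closure_prod_eq, closure_singleton]
          exact ⟨rfl, hDset _⟩
        have := closure_minimal hsub2 isClosed_closure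
        exact this hyc
      · rw [Irrational, not_not] at hlam
        obtain ⟨q, hq⟩ := hlam
        refine ⟨q.num, -(q.den : ℤ), ?_, ?_⟩
        · rintro ⟨-, h2⟩
          have : (q.den : ℤ) = 0 := by omega
          exact absurd this (by exact_mod_cast q.den_nz)
        · have hu2 : u.2 = (q : ℝ) * u.1 := by
            have hq' := hq.symm
            rw [div_eq_iff hu1] at hq'
            exact hq'
          have hnum : (q.num : ℝ) = (q : ℝ) * (q.den : ℝ) := by
            have hden : ((q.den : ℝ)) ≠ 0 := by exact_mod_cast q.den_nz
            have : (q : ℝ) = (q.num : ℝ) / (q.den : ℝ) := by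
              exact_mod_cast (Rat.num_div_den q).symm
            rw [this]; field_simp
          push_cast
          rw [hu2, hnum]
          ring
  obtain ⟨A, B, hAB0, hABu⟩ := hdep
  have hcastAB : ¬((A : ℝ) = 0 ∧ (B : ℝ) = 0) := by
    rintro ⟨h1, h2⟩
    exact hAB0 ⟨by exact_mod_cast h1, by exact_mod_cast h2⟩
  have hABpos : (0 : ℝ) < (A : ℝ) ^ 2 + (B : ℝ) ^ 2 := by
    rcases not_and_or.1 hcastAB with h | h
    · have h1 : (0 : ℝ) < (A : ℝ) ^ 2 := by positivity
      nlinarith [sq_nonneg (B : ℝ)]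
    · have h1 : (0 : ℝ) < (B : ℝ) ^ 2 := by positivity
      nlinarith [sq_nonneg (A : ℝ)]
  set w : ℝ × ℝ := ((A : ℝ) / ((A : ℝ) ^ 2 + (B : ℝ) ^ 2),
    (B : ℝ) / ((A : ℝ) ^ 2 + (B : ℝ) ^ 2)) with hwdef
  set f : ℝ × ℝ → ℝ := fun p => (A : ℝ) * p.1 + (B : ℝ) * p.2 with hfdef
  have hfw : f w = 1 := by
    simp only [hfdef, hwdef]
    field_simp
  -- the kernel of `f` is the line through `u`, which lies in `H`
  have hker : ∀ p : ℝ × ℝ, f p = 0 → p ∈ H := by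
    intro p hp
    simp only [hfdef] at hp
    have hdet : p.1 * u.2 - p.2 * u.1 = 0 := by
      rcases not_and_or.1 hcastAB with hA | hB
      · apply mul_left_cancel₀ hA
        rw [mul_zero, mul_sub]
        linear_combination u.2 * hp - p.2 * hABu
      · apply mul_left_cancel₀ hB
        rw [mul_zero, mul_sub]
        linear_combination p.1 * hABu - u.1 * hp
    rcases eq_or_ne u.1 0 with h1 | h1
    · have hu2 : u.2 ≠ 0 := by
        intro h2
        exact hu0 (Prod.ext h1 h2)
      have hp1 : p.1 = 0 := by
        have : p.1 * u.2 = 0 := by rw [h1, mul_zero] at hdet; linarith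
        exact (mul_eq_zero.1 this).resolve_right hu2
      have hl := hline (p.2 / u.2)
      have he : (p.2 / u.2) • u = p := by
        refine Prod.ext ?_ ?_
        · simp [h1, hp1]
        · simp [smul_eq_mul, div_mul_cancel₀ _ hu2]
      rwa [he] at hl
    · have hl := hline (p.1 / u.1)
      have he : (p.1 / u.1) • u = p := by
        refine Prod.ext ?_ ?_
        · simp [smul_eq_mul, div_mul_cancel₀ _ h1]
        · have : p.1 * u.2 = p.2 * u.1 := by linarith
          simp only [Prod.smul_snd, smul_eq_mul]
          field_simp
          linarith [this]
      rwa [he] at hl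
  -- the subgroup of `c` with `c • w ∈ H`
  set FH : AddSubgroup ℝ :=
    { carrier := {c : ℝ | c • w ∈ H}
      zero_mem' := by
        simp only [mem_setOf_eq, zero_smul]
        exact subset_closure (TT a b).zero_mem
      add_mem' := by
        intro c c' hc hc'
        simp only [mem_setOf_eq, add_smul]
        exact (TT a b).topologicalClosure.add_mem hc hc'
      neg_mem' := by
        intro c hc
        simp only [mem_setOf_eq, neg_smul]
        exact (TT a b).topologicalClosure.neg_mem hc } with hFHdef
  have hFHclosed : IsClosed (FH : Set ℝ) :=
    IsClosed.preimage (continuous_id.smul continuous_const) isClosed_closure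
  have hfH : ∀ p : ℝ × ℝ, p ∈ H → f p ∈ FH := by
    intro p hp
    have hker' : f (p - (f p) • w) = 0 := by
      simp only [hfdef, Prod.fst_sub, Prod.snd_sub, Prod.smul_fst, Prod.smul_snd, smul_eq_mul]
      have hfw' : (A : ℝ) * w.1 + (B : ℝ) * w.2 = 1 := hfw
      linear_combination (-((A : ℝ) * p.1 + (B : ℝ) * p.2)) * hfw'
    have h1 : p - (f p) • w ∈ H := hker _ hker'
    have : (f p) • w = p - (p - (f p) • w) := by abel
    show (f p) • w ∈ H
    rw [this]
    exact (TT a b).topologicalClosure.sub_mem hp h1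
  rcases AddSubgroup.dense_or_cyclic FH with hFd | ⟨c, hc⟩
  · exfalso
    apply hd
    have hFuniv : (FH : Set ℝ) = univ := by
      rw [← hFHclosed.closure_eq]
      exact hFd.closure_eq
    rw [dense_iff_closure_eq]
    apply eq_univ_of_forall
    intro p
    have h1 : f p ∈ FH := by rw [← SetLike.mem_coe, hFuniv]; trivial
    have h2 : (f p) • w ∈ H := h1
    have h3 : p - (f p) • w ∈ H := hker _ (by
      simp only [hfdef, Prod.fst_sub, Prod.snd_sub, Prod.smul_fst, Prod.smul_snd, smul_eq_mul]
      have hfw' : (A : ℝ) * w.1 + (B : ℝ) * w.2 = 1 := hfw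
      linear_combination (-((A : ℝ) * p.1 + (B : ℝ) * p.2)) * hfw')
    have : p = (p - (f p) • w) + (f p) • w := by abel
    rw [this]
    exact (TT a b).topologicalClosure.add_mem h3 h2
  · have hA : (A : ℝ) ∈ FH := by
      have h1 : (((1 : ℤ) : ℝ), ((0 : ℤ) : ℝ)) ∈ H := subset_closure (int_pair_mem_TT 1 0)
      have := hfH _ h1
      simpa [hfdef] using this
    have hB : (B : ℝ) ∈ FH := by
      have h1 : (((0 : ℤ) : ℝ), ((1 : ℤ) : ℝ)) ∈ H := subset_closure (int_pair_mem_TT 0 1)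
      have := hfH _ h1
      simpa [hfdef] using this
    have hV : (A : ℝ) * a + (B : ℝ) * b ∈ FH := hfH _ hvH
    rw [hc] at hA hB hV
    obtain ⟨nA, hnA⟩ := AddSubgroup.mem_closure_singleton.1 hA
    obtain ⟨nB, hnB⟩ := AddSubgroup.mem_closure_singleton.1 hB
    obtain ⟨nV, hnV⟩ := AddSubgroup.mem_closure_singleton.1 hV
    rw [zsmul_eq_mul] at hnA hnB hnV
    have hc0 : c ≠ 0 := by
      intro h0
      rw [h0, mul_zero] at hnA hnB
      exact hcastAB ⟨hnA.symm, hnB.symm⟩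
    refine ⟨nA, nB, nV, ?_, ?_⟩
    · rintro ⟨h1, h2⟩
      rw [h1] at hnA
      rw [h2] at hnB
      simp at hnA hnB
      exact hcastAB ⟨hnA.symm, hnB.symm⟩
    · apply mul_right_cancel₀ hc0
      linear_combination a * hnA + b * hnB - hnV

section SuspPart

lemma Emap_zero : Emap 0 = 1 := by simpa using Emap_int 0

lemma rot_inv_apply (s : ℝ) (x : Circle) : ((rot s)⁻¹) x = (Emap s)⁻¹ * x := by
  have h1 : ((rot s)⁻¹ : Equiv.Perm Circle) = Equiv.mulLeft (Emap s)⁻¹ := by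
    rw [rot]
    rw [show Circle.exp (2 * Real.pi * s) = Emap s from rfl]
    rw [Equiv.Perm.inv_def, Equiv.mulLeft_symm]
  rw [h1]
  rfl

lemma rot_zpow (s : ℝ) (n : ℤ) : ∀ x : Circle, ((rot s) ^ n) x = Emap ((n : ℝ) * s) * x := by
  induction n using Int.induction_on with
  | zero =>
      intro x
      rw [zpow_zero]
      have h0 : (((0 : ℤ) : ℝ)) * s = 0 := by push_cast; ring
      rw [h0, Emap_zero, one_mul]
      rfl
  | succ k ih =>
      intro x
      rw [zpow_add_one, Equiv.Perm.mul_apply]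
      rw [show (rot s) x = Emap s * x from rfl, ih]
      rw [← mul_assoc, ← Emap_add]
      congr 2
      push_cast; ring
  | pred k ih =>
      intro x
      rw [zpow_sub_one, Equiv.Perm.mul_apply]
      rw [rot_inv_apply, ih, ← mul_assoc, ← Emap_neg, ← Emap_add]
      congr 2
      push_cast; ring

noncomputable def Fmap (s : ℝ) (p : Circle × ℝ) : Circle × Circle :=
  (p.1 * Emap (s * p.2), Emap p.2)

lemma Fmap_respects (s : ℝ) : ∀ p q : Circle × ℝ, SuspRel (rot s) p q → Fmap s p = Fmap s q := by
  rintro ⟨x, r⟩ ⟨y, r'⟩ ⟨n, h1, h2⟩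
  dsimp at h1 h2
  subst h1 h2
  unfold Fmap
  dsimp
  refine Prod.ext ?_ ?_
  · show x * Emap (s * r) = (rot s ^ n) x * Emap (s * (r - n))
    rw [rot_zpow]
    rw [mul_comm (Emap ((n : ℝ) * s)) x, mul_assoc, ← Emap_add]
    congr 2
    ring
  · show Emap r = Emap (r - n)
    rw [sub_eq_add_neg, show (-(n : ℝ)) = ((-n : ℤ) : ℝ) by push_cast; ring, Emap_add_int]

noncomputable def PhiS (s : ℝ) : Susp (rot s) → Circle × Circle :=
  Quot.lift (Fmap s) (Fmap_respects s)

lemma continuous_PhiS (s : ℝ) : Continuous (PhiS s) := by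
  apply continuous_quot_lift
  unfold Fmap
  exact (continuous_fst.mul (continuous_Emap.comp (continuous_const.mul continuous_snd))).prodMk
    (continuous_Emap.comp continuous_snd)

lemma PhiS_mk (s : ℝ) (x : Circle) (r : ℝ) :
    PhiS s (Quot.mk _ (x, r)) = (x * Emap (s * r), Emap r) := rfl

lemma PhiS_bijective (s : ℝ) : Function.Bijective (PhiS s) := by
  constructor
  · intro y y'
    induction y using Quot.ind with | _ p =>
    induction y' using Quot.ind with | _ q =>
    obtain ⟨x, r⟩ := p
    obtain ⟨x', r'⟩ := q
    intro h
    rw [PhiS_mk, PhiS_mk, Prod.ext_iff] at h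
    obtain ⟨h1, h2⟩ := h
    dsimp at h1 h2
    obtain ⟨m, hm⟩ := Emap_eq_iff.1 h2
    apply Quot.sound
    refine ⟨m, ?_, ?_⟩
    · show x' = (rot s ^ m) x
      rw [rot_zpow]
      have : Emap (s * r) = Emap ((m : ℝ) * s) * Emap (s * r') := by
        rw [← Emap_add]
        congr 1
        rw [hm]; ring
      have h3 : (x * Emap ((m : ℝ) * s)) * Emap (s * r') = x' * Emap (s * r') := by
        rw [mul_assoc, ← this]
        exact h1
      have h4 := mul_right_cancel h3
      rw [← h4, mul_comm]
    · show r' = r - m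
      rw [hm]; ring
  · rintro ⟨z, w⟩
    obtain ⟨r, hr⟩ := Emap_surjective w
    refine ⟨Quot.mk _ (z * (Emap (s * r))⁻¹, r), ?_⟩
    rw [PhiS_mk, hr]
    refine Prod.ext ?_ rfl
    dsimp
    rw [mul_assoc, inv_mul_cancel, mul_one]

lemma compactSpace_susp (s : ℝ) : CompactSpace (Susp (rot s)) := by
  constructor
  have hsurj : univ ⊆ (Quot.mk (SuspRel (rot s))) '' ((univ : Set Circle) ×ˢ Icc (0:ℝ) 1) := by
    intro y _
    induction y using Quot.ind with | _ p =>
    obtain ⟨x, r⟩ := p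
    refine ⟨((rot s ^ ⌊r⌋) x, r - ⌊r⌋), ⟨mem_univ _, ?_⟩, ?_⟩
    · exact ⟨Int.fract_nonneg r, (Int.fract_lt_one r).le⟩
    · exact (Quot.sound ⟨⌊r⌋, rfl, rfl⟩).symm
  have hc : IsCompact ((Quot.mk (SuspRel (rot s))) '' ((univ : Set Circle) ×ˢ Icc (0:ℝ) 1)) :=
    (isCompact_univ.prod isCompact_Icc).image (continuous_quot_mk)
  rw [Subset.antisymm hsurj (subset_univ _)]
  exact hc

noncomputable def suspHomeo (s : ℝ) : Susp (rot s) ≃ₜ Circle × Circle := by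
  have : CompactSpace (Susp (rot s)) := compactSpace_susp s
  exact @Continuous.homeoOfEquivCompactToT2 _ _ _ _ this _
    (Equiv.ofBijective (PhiS s) (PhiS_bijective s)) (continuous_PhiS s)

lemma suspHomeo_apply (s : ℝ) (y : Susp (rot s)) : suspHomeo s y = PhiS s y := rfl

lemma suspHomeo_conj (s τ : ℝ) (y : Susp (rot s)) :
    suspHomeo s (suspT (rot s) τ y) =
      (Emap (s * τ) * (suspHomeo s y).1, Emap τ * (suspHomeo s y).2) := by
  induction y using Quot.ind with | _ p =>
  obtain ⟨x, r⟩ := p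
  show PhiS s (Quot.mk _ (x, r + τ)) = _
  rw [PhiS_mk]
  rw [suspHomeo_apply, PhiS_mk]
  refine Prod.ext ?_ ?_
  · show x * Emap (s * (r + τ)) = Emap (s * τ) * (x * Emap (s * r))
    rw [mul_comm (Emap (s * τ)), mul_assoc, ← Emap_add]
    congr 2
    ring
  · show Emap (r + τ) = Emap τ * Emap r
    rw [← Emap_add, add_comm]

end SuspPart

lemma minimal_conj_aux {X Y : Type*} [TopologicalSpace X] [TopologicalSpace Y]
    (h : X ≃ₜ Y) {f : X → X} {g : Y → Y} (hc : ∀ x, h (f x) = g (h x))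
    (hg : IsMinimalMap g) : IsMinimalMap f := by
  intro M hM hinv
  have himg : g '' (h '' M) = h '' M := by
    rw [← image_comp]
    have he : (g ∘ h) = h ∘ f := funext fun x => (hc x).symm
    rw [he, image_comp, hinv]
  rcases hg (h '' M) (h.isClosedMap M hM) himg with h0 | h0
  · exact Or.inl (image_eq_empty.1 h0)
  · right
    apply eq_univ_of_forall
    intro x
    have : h x ∈ h '' M := h0 ▸ mem_univ _
    obtain ⟨y, hy, hyx⟩ := this
    rwa [← h.injective hyx]

lemma minimal_conj_iff {X Y : Type*} [TopologicalSpace X] [TopologicalSpace Y]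
    (h : X ≃ₜ Y) {f : X → X} {g : Y → Y} (hc : ∀ x, h (f x) = g (h x)) :
    IsMinimalMap f ↔ IsMinimalMap g := by
  constructor
  · refine fun hf => minimal_conj_aux h.symm ?_ hf
    intro y
    apply h.injective
    rw [hc, h.apply_symm_apply, h.apply_symm_apply]
  · exact minimal_conj_aux h hc

/-- Let `s` be irrational and `(Y, T)` the standard suspension of the rotation
`R_s`. For each nonzero real `t`, the time-`1/t` map on `(Y, T)` is minimal iff
`t ∉ ℚ + sℚ`. -/
theorem time_map_minimal_iff_not_mem_rat_span (s : ℝ) (hs : Irrational s)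
    (t : ℝ) (ht : t ≠ 0) :
    IsMinimalMap (suspT (rot s) (1 / t)) ↔
      ¬ ∃ r₁ r₂ : ℚ, t = (r₁ : ℝ) + s * (r₂ : ℝ) := by
  have hconj := minimal_conj_iff (suspHomeo s)
    (f := suspT (rot s) (1 / t))
    (g := fun z : Circle × Circle => (Emap (s * (1 / t)) * z.1, Emap (1 / t) * z.2))
    (fun y => suspHomeo_conj s (1 / t) y)
  rw [hconj]
  set a : ℝ := s * (1 / t) with hadef
  set b : ℝ := 1 / t with hbdef
  constructor
  · intro hmin hex
    obtain ⟨r₁, r₂, hr⟩ := hex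
    set n : ℤ := r₂.num * r₁.den with hndef
    set m : ℤ := r₁.num * r₂.den with hmdef
    set k : ℤ := (r₁.den : ℤ) * r₂.den with hkdef
    have e₁ : ((r₁.den : ℝ)) * (r₁ : ℝ) = (r₁.num : ℝ) := by
      exact_mod_cast congrArg (Rat.cast (K := ℝ)) (mul_comm r₁ (r₁.den : ℚ) ▸ Rat.mul_den_eq_num r₁)
    have e₂ : ((r₂.den : ℝ)) * (r₂ : ℝ) = (r₂.num : ℝ) := by
      exact_mod_cast congrArg (Rat.cast (K := ℝ)) (mul_comm r₂ (r₂.den : ℚ) ▸ Rat.mul_den_eq_num r₂)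
    have hk : (k : ℝ) * t = (n : ℝ) * s + (m : ℝ) := by
      rw [hndef, hmdef, hkdef]
      push_cast
      linear_combination ((r₁.den : ℝ) * (r₂.den : ℝ)) * hr + ((r₂.den : ℝ)) * e₁
        + ((r₁.den : ℝ)) * s * e₂
    have h0 : ¬(n = 0 ∧ m = 0) := by
      rintro ⟨hn0, hm0⟩
      rw [hn0, hm0] at hk
      simp only [Int.cast_zero, zero_mul, zero_add, mul_eq_zero] at hk
      rcases hk with hk | hk
      · have hkne : k ≠ 0 := by
          rw [hkdef]
          have h1 : (r₁.den : ℤ) ≠ 0 := by exact_mod_cast r₁.den_nz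
          have h2 : (r₂.den : ℤ) ≠ 0 := by exact_mod_cast r₂.den_nz
          exact mul_ne_zero h1 h2
        exact hkne (by exact_mod_cast hk)
      · exact ht hk
    have hdep : (n : ℝ) * a + (m : ℝ) * b = (k : ℝ) := by
      rw [hadef, hbdef]
      field_simp
      linear_combination (-1 : ℝ) * hk
    exact torus_not_minimal_of_not_dense (not_dense_TT n m k h0 hdep) hmin
  · intro hne
    apply torus_minimal_of_dense
    by_contra hnd
    obtain ⟨n, m, k, h0, hdep⟩ := rational_dep_of_not_dense hnd
    apply hne
    have hnsm : (n : ℝ) * s + (m : ℝ) = (k : ℝ) * t := by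
      rw [hadef, hbdef] at hdep
      field_simp at hdep
      linear_combination hdep
    have hk0 : k ≠ 0 := by
      intro hk0
      rw [hk0] at hnsm
      simp only [Int.cast_zero, zero_mul] at hnsm
      rcases eq_or_ne n 0 with hn0 | hn0
      · rw [hn0] at hnsm
        simp only [Int.cast_zero, zero_mul, zero_add] at hnsm
        exact h0 ⟨hn0, by exact_mod_cast hnsm⟩
      · apply hs
        refine ⟨(-(m : ℚ)) / (n : ℚ), ?_⟩
        have hnr : (n : ℝ) ≠ 0 := Int.cast_ne_zero.2 hn0
        push_cast
        rw [div_eq_iff hnr]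
        linarith [hnsm]
    refine ⟨(m : ℚ) / (k : ℚ), (n : ℚ) / (k : ℚ), ?_⟩
    have hkr : (k : ℝ) ≠ 0 := Int.cast_ne_zero.2 hk0
    push_cast
    field_simp
    linear_combination (-1 : ℝ) * hnsm
end
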